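/- arXiv:0810.2466 — 6 statements merged into one kernel-verified Lean document; each statement's English description precedes it below -/
import Mathlib

section
/- Let n ≥ 2, R > 0, τ > 0 and C ≥ 0. Let h : ℝⁿ → ℝ be differentiable at every point of E_R and satisfy ‖Dh(x)‖ ≤ C‖x‖^(−τ−1) for all x ∈ E_R. Then there exists a real number a such that h(x) tends to a as ‖x‖ → ∞ (i.e. along the filter of complements of compact sets), and moreover |h(x) − a| ≤ (C/τ)·‖x‖^(−τ) for every x ∈ E_R. -/
open MeasureTheory Filter Metric

/-- Lemma 4 of the paper. If `h : ℝⁿ → ℝ` (with `n ≥ 2`) is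
differentiable on the exterior region `E_R = {‖x‖ ≥ R}` with
`‖Dh(x)‖ ≤ C‖x‖^(-τ-1)` there, then `h` has a finite limit `a` at infinity and
`|h x - a| ≤ (C/τ)‖x‖^(-τ)` on `E_R`. -/
theorem lemma4_limit_at_infinity (n : ℕ) (hn : 2 ≤ n) (R τ C : ℝ)
    (hR : 0 < R) (hτ : 0 < τ) (hC : 0 ≤ C)
    (h : EuclideanSpace ℝ (Fin n) → ℝ)
    (hdiff : ∀ x : EuclideanSpace ℝ (Fin n), R ≤ ‖x‖ → DifferentiableAt ℝ h x)
    (hbound : ∀ x : EuclideanSpace ℝ (Fin n), R ≤ ‖x‖ →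
      ‖fderiv ℝ h x‖ ≤ C * ‖x‖ ^ (-τ - 1)) :
    ∃ a : ℝ,
      Tendsto h (cocompact (EuclideanSpace ℝ (Fin n))) (nhds a) ∧
      ∀ x : EuclideanSpace ℝ (Fin n), R ≤ ‖x‖ → |h x - a| ≤ (C / τ) * ‖x‖ ^ (-τ) := by
  have hCτ : 0 ≤ C / τ := div_nonneg hC hτ.le
  have hφ_anti : ∀ s t : ℝ, R ≤ s → s ≤ t →
      (C/τ) * t ^ (-τ) ≤ (C/τ) * s ^ (-τ) := fun s t hs hst =>
    mul_le_mul_of_nonneg_left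
      (Real.rpow_le_rpow_of_nonpos (hR.trans_le hs) hst (neg_nonpos.mpr hτ.le)) hCτ
  have hφ_nonneg : ∀ s : ℝ, R ≤ s → 0 ≤ (C/τ) * s ^ (-τ) := fun s hs =>
    mul_nonneg hCτ (Real.rpow_nonneg (hR.le.trans hs) _)
  -- radial derivative facts
  have hray : ∀ (u : EuclideanSpace ℝ (Fin n)), ‖u‖ = 1 → ∀ r : ℝ, R ≤ r →
      HasDerivAt (fun r : ℝ => h (r • u)) ((fderiv ℝ h (r • u)) u) r := by
    intro u hu r hr
    have h1 : HasDerivAt (fun r : ℝ => r • u) u r := by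
      simpa using (hasDerivAt_id r).smul_const u
    have hnorm : R ≤ ‖r • u‖ := by
      rw [norm_smul, hu, mul_one, Real.norm_eq_abs, abs_of_pos (hR.trans_le hr)]
      exact hr
    exact (hdiff _ hnorm).hasFDerivAt.comp_hasDerivAt r h1
  have hnorm_smul : ∀ (u : EuclideanSpace ℝ (Fin n)), ‖u‖ = 1 → ∀ r : ℝ, R ≤ r →
      ‖r • u‖ = r := by
    intro u hu r hr
    rw [norm_smul, hu, mul_one, Real.norm_eq_abs, abs_of_pos (hR.trans_le hr)]
  have hd : ∀ (u : EuclideanSpace ℝ (Fin n)), ‖u‖ = 1 → ∀ r : ℝ, R ≤ r →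
      |(fderiv ℝ h (r • u)) u| ≤ C * r ^ (-τ - 1) := by
    intro u hu r hr
    have h1 : |(fderiv ℝ h (r • u)) u| ≤ ‖fderiv ℝ h (r • u)‖ := by
      simpa [hu] using (fderiv ℝ h (r • u)).le_opNorm u
    refine h1.trans ?_
    have h2 := hbound (r • u) (by rw [hnorm_smul u hu r hr]; exact hr)
    rwa [hnorm_smul u hu r hr] at h2
  have hrpow : ∀ r : ℝ, R ≤ r →
      HasDerivAt (fun r : ℝ => (C/τ) * r ^ (-τ)) (-(C * r ^ (-τ-1))) r := by
    intro r hr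
    have h0 : (r:ℝ) ≠ 0 := ne_of_gt (hR.trans_le hr)
    have h1 := (Real.hasDerivAt_rpow_const (x := r) (p := -τ) (Or.inl h0)).const_mul (C/τ)
    refine h1.congr_deriv ?_
    rw [div_mul_eq_mul_div, div_eq_iff hτ.ne']
    ring
  -- key radial estimate
  have key : ∀ (u : EuclideanSpace ℝ (Fin n)), ‖u‖ = 1 → ∀ s t : ℝ, R ≤ s → s ≤ t →
      |h (t • u) - h (s • u)| ≤ (C/τ) * s ^ (-τ) - (C/τ) * t ^ (-τ) := by
    intro u hu s t hs hst
    have hF : AntitoneOn (fun r : ℝ => h (r • u) + (C/τ) * r ^ (-τ)) (Set.Ici R) := by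
      apply antitoneOn_of_deriv_nonpos (convex_Ici R)
      · intro r hr
        exact ((hray u hu r hr).add (hrpow r hr)).continuousAt.continuousWithinAt
      · intro r hr
        rw [interior_Ici] at hr
        exact ((hray u hu r hr.le).add (hrpow r hr.le)).differentiableAt.differentiableWithinAt
      · intro r hr
        rw [interior_Ici] at hr
        rw [show deriv (fun r : ℝ => h (r • u) + (C/τ) * r ^ (-τ)) r = _ from ((hray u hu r hr.le).add (hrpow r hr.le)).deriv]
        have h1 : (fderiv ℝ h (r • u)) u ≤ C * r ^ (-τ-1) := le_of_abs_le (hd u hu r hr.le)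
        linarith
    have hG : MonotoneOn (fun r : ℝ => h (r • u) - (C/τ) * r ^ (-τ)) (Set.Ici R) := by
      apply monotoneOn_of_deriv_nonneg (convex_Ici R)
      · intro r hr
        exact ((hray u hu r hr).sub (hrpow r hr)).continuousAt.continuousWithinAt
      · intro r hr
        rw [interior_Ici] at hr
        exact ((hray u hu r hr.le).sub (hrpow r hr.le)).differentiableAt.differentiableWithinAt
      · intro r hr
        rw [interior_Ici] at hr
        rw [show deriv (fun r : ℝ => h (r • u) - (C/τ) * r ^ (-τ)) r = _ from ((hray u hu r hr.le).sub (hrpow r hr.le)).deriv]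
        have h1 : -(C * r ^ (-τ-1)) ≤ (fderiv ℝ h (r • u)) u := neg_le_of_abs_le (hd u hu r hr.le)
        linarith
    have hsR : s ∈ Set.Ici R := hs
    have htR : t ∈ Set.Ici R := hs.trans hst
    have h1 : h (t • u) + (C/τ) * t ^ (-τ) ≤ h (s • u) + (C/τ) * s ^ (-τ) := hF hsR htR hst
    have h2 : h (s • u) - (C/τ) * s ^ (-τ) ≤ h (t • u) - (C/τ) * t ^ (-τ) := hG hsR htR hst
    rw [abs_le]
    constructor <;> linarith
  -- existence of ray limits
  have hRt : Tendsto (fun k : ℕ => (R + k : ℝ)) atTop atTop :=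
    tendsto_atTop_add_const_left _ R tendsto_natCast_atTop_atTop
  have raylim : ∀ (u : EuclideanSpace ℝ (Fin n)), ‖u‖ = 1 →
      ∃ a : ℝ, ∀ s : ℝ, R ≤ s → |h (s • u) - a| ≤ (C/τ) * s ^ (-τ) := by
    intro u hu
    have hRk : ∀ k : ℕ, R ≤ R + k := fun k => le_add_of_nonneg_right (Nat.cast_nonneg k)
    have hcs : CauchySeq (fun k : ℕ => h ((R + k) • u)) := by
      apply cauchySeq_of_le_tendsto_0 (fun N : ℕ => (C/τ) * (R + N : ℝ) ^ (-τ))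
      · intro k m N hk hm
        wlog hkm : k ≤ m generalizing k m
        · rw [dist_comm]; exact this m k hm hk (le_of_not_ge hkm)
        have hRkm : (R + k : ℝ) ≤ R + m := by
          have : (k : ℝ) ≤ m := Nat.cast_le.mpr hkm
          linarith
        rw [Real.dist_eq, abs_sub_comm]
        refine (key u hu (R + k) (R + m) (hRk k) hRkm).trans ?_
        have h1 : (C/τ) * (R + k : ℝ) ^ (-τ) ≤ (C/τ) * (R + N : ℝ) ^ (-τ) :=
          hφ_anti _ _ (hRk N) (by have : (N:ℝ) ≤ k := Nat.cast_le.mpr hk; linarith)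
        have h2 : 0 ≤ (C/τ) * (R + m : ℝ) ^ (-τ) := hφ_nonneg _ (hRk m)
        linarith
      · have := ((tendsto_rpow_neg_atTop hτ).comp hRt).const_mul (C/τ)
        simpa [Function.comp] using this
    obtain ⟨a, ha⟩ := cauchySeq_tendsto_of_complete hcs
    refine ⟨a, fun s hs => ?_⟩
    have hlim : Tendsto (fun k : ℕ => |h (s • u) - h ((R + k) • u)|) atTop
        (nhds |h (s • u) - a|) := (tendsto_const_nhds.sub ha).abs
    refine le_of_tendsto hlim ?_
    filter_upwards [hRt.eventually_ge_atTop s] with k hk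
    have h1 := key u hu s (R + k) hs hk
    rw [abs_sub_comm] at h1
    have h2 : 0 ≤ (C/τ) * (R + k : ℝ) ^ (-τ) := hφ_nonneg _ (hRk k)
    linarith
  choose A hA using raylim
  -- limits along non-antipodal rays agree
  have same : ∀ u v (hu : ‖u‖ = 1) (hv : ‖v‖ = 1), u + v ≠ 0 → A u hu = A v hv := by
    intro u v hu hv huv
    have hm : 0 < ‖u + v‖ := norm_pos_iff.mpr huv
    set m : ℝ := ‖u + v‖ / 2 with hm_def
    have hm2 : 0 < m := by positivity
    have hseg : ∀ w ∈ segment ℝ u v, m ≤ ‖w‖ := by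
      rintro w ⟨p, q, hp, hq, hpq, rfl⟩
      have h1 : (inner ℝ (u + v) (p • u + q • v) : ℝ) = 1 + inner ℝ u v := by
        simp only [inner_add_left, inner_add_right, real_inner_smul_right,
          real_inner_self_eq_norm_sq, hu, hv, real_inner_comm v u]
        linear_combination (1 + (inner ℝ v u : ℝ)) * hpq
      have h2 : ‖u + v‖ ^ 2 = 2 * (1 + (inner ℝ u v : ℝ)) := by
        rw [norm_add_sq_real, hu, hv]; ring
      have h3 := real_inner_le_norm (u + v) (p • u + q • v)
      rw [hm_def]
      nlinarith [norm_nonneg (p • u + q • v)]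
    set K : ℝ := C * m ^ (-τ - 1) * ‖u - v‖ with hK_def
    have hdistb : ∀ t : ℝ, R ≤ t → R / m ≤ t →
        |h (t • u) - h (t • v)| ≤ K * t ^ (-τ) := by
      intro t ht htm
      have ht0 : 0 < t := hR.trans_le ht
      have htm0 : R ≤ t * m := by
        rw [div_le_iff₀ hm2] at htm; linarith
      have hmem : ∀ z ∈ segment ℝ (t • u) (t • v), t * m ≤ ‖z‖ := by
        rintro z ⟨p, q, hp, hq, hpq, rfl⟩
        have hz : p • t • u + q • t • v = t • (p • u + q • v) := by
          rw [smul_add, smul_smul, smul_smul, smul_smul, smul_smul, mul_comm p t, mul_comm q t]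
        rw [hz, norm_smul, Real.norm_eq_abs, abs_of_pos ht0]
        exact mul_le_mul_of_nonneg_left (hseg _ ⟨p, q, hp, hq, hpq, rfl⟩) ht0.le
      have hb : ∀ z ∈ segment ℝ (t • u) (t • v), ‖fderiv ℝ h z‖ ≤ C * (t * m) ^ (-τ - 1) := by
        intro z hz
        have h1 : t * m ≤ ‖z‖ := hmem z hz
        have h2 : R ≤ ‖z‖ := htm0.trans h1
        refine (hbound z h2).trans ?_
        exact mul_le_mul_of_nonneg_left
          (Real.rpow_le_rpow_of_nonpos (by positivity) h1 (by linarith)) hC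
      have hmv := Convex.norm_image_sub_le_of_norm_fderiv_le
        (fun z hz => hdiff z (htm0.trans (hmem z hz))) hb (convex_segment _ _)
        (right_mem_segment _ _ _) (left_mem_segment _ _ _)
      have hnormuv : ‖t • u - t • v‖ = t * ‖u - v‖ := by
        rw [← smul_sub, norm_smul, Real.norm_eq_abs, abs_of_pos ht0]
      rw [Real.norm_eq_abs, hnormuv] at hmv
      refine hmv.trans (le_of_eq ?_)
      rw [Real.mul_rpow ht0.le hm2.le, hK_def]
      have e2 : t ^ (-τ-1) * t = t ^ (-τ) := by
        nth_rewrite 2 [← Real.rpow_one t]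
        rw [← Real.rpow_add ht0]
        norm_num
      calc C * (t ^ (-τ - 1) * m ^ (-τ - 1)) * (t * ‖u - v‖)
          = C * m ^ (-τ - 1) * ‖u - v‖ * (t ^ (-τ - 1) * t) := by ring
        _ = C * m ^ (-τ - 1) * ‖u - v‖ * t ^ (-τ) := by rw [e2]
    have hK0 : 0 ≤ K := by positivity
    have tend0 : Tendsto (fun t : ℝ => 2 * ((C/τ) * t ^ (-τ)) + K * t ^ (-τ)) atTop (nhds 0) := by
      have h0 := tendsto_rpow_neg_atTop hτ
      simpa using ((h0.const_mul (C/τ)).const_mul 2).add (h0.const_mul K)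
    have hle : |A u hu - A v hv| ≤ 0 := by
      apply ge_of_tendsto tend0
      filter_upwards [eventually_ge_atTop R, eventually_ge_atTop (R/m)] with t ht htm
      have b1 := hA u hu t ht
      have b2 := hA v hv t ht
      have b3 := hdistb t ht htm
      rw [abs_sub_comm] at b1
      have t1 : |A u hu - A v hv| ≤ |A u hu - h (t • u)| + |h (t • u) - A v hv| :=
        abs_sub_le _ _ _
      have t2 : |h (t • u) - A v hv| ≤ |h (t • u) - h (t • v)| + |h (t • v) - A v hv| :=
        abs_sub_le _ _ _
      linarith
    have := le_antisymm hle (abs_nonneg _)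
    rw [abs_eq_zero, sub_eq_zero] at this
    exact this
  -- a distinguished direction
  have h0n : 0 < n := by omega
  have h1n : 1 < n := by omega
  set i0 : Fin n := ⟨0, h0n⟩ with hi0
  set i1 : Fin n := ⟨1, h1n⟩ with hi1
  set e0 : EuclideanSpace ℝ (Fin n) := EuclideanSpace.single i0 1 with he0_def
  set e1 : EuclideanSpace ℝ (Fin n) := EuclideanSpace.single i1 1 with he1_def
  have he0 : ‖e0‖ = 1 := by rw [he0_def, EuclideanSpace.norm_single]; norm_num
  have he1 : ‖e1‖ = 1 := by rw [he1_def, EuclideanSpace.norm_single]; norm_num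
  have hi01 : i0 ≠ i1 := by
    rw [hi0, hi1]
    simp [Fin.ext_iff]
  have same' : ∀ u (hu : ‖u‖ = 1), A u hu = A e0 he0 := by
    intro u hu
    by_cases hcase : u + e0 ≠ 0
    · exact same u e0 hu he0 hcase
    · push_neg at hcase
      have hu_eq : u = -e0 := eq_neg_of_add_eq_zero_left hcase
      have h1 : u + e1 ≠ 0 := by
        rw [hu_eq]
        intro hcon
        have he : e0 = e1 := by rwa [neg_add_eq_zero] at hcon
        have := congrArg (· i0) he
        rw [he0_def, he1_def] at this
        simp [EuclideanSpace.single_apply, hi01] at this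
      have h2 : e1 + e0 ≠ 0 := by
        intro hcon
        have he : e1 = -e0 := eq_neg_of_add_eq_zero_left hcon
        have := congrArg (· i1) he
        rw [he0_def, he1_def] at this
        simp [EuclideanSpace.single_apply, hi01.symm] at this
      exact (same u e1 hu he1 h1).trans (same e1 e0 he1 he0 h2)
  -- the bound
  have bound : ∀ x : EuclideanSpace ℝ (Fin n), R ≤ ‖x‖ →
      |h x - A e0 he0| ≤ (C/τ) * ‖x‖ ^ (-τ) := by
    intro x hx
    have hx0 : 0 < ‖x‖ := hR.trans_le hx
    have hu : ‖(‖x‖⁻¹ • x)‖ = 1 := by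
      rw [norm_smul, norm_inv, norm_norm, inv_mul_cancel₀ hx0.ne']
    have hxx : ‖x‖ • (‖x‖⁻¹ • x) = x := by
      rw [smul_smul, mul_inv_cancel₀ hx0.ne', one_smul]
    have hb := hA _ hu ‖x‖ hx
    rw [hxx, same' _ hu] at hb
    exact hb
  -- conclusion
  refine ⟨A e0 he0, ?_, bound⟩
  have h0 : Tendsto (fun x : EuclideanSpace ℝ (Fin n) => (C/τ) * ‖x‖ ^ (-τ))
      (cocompact (EuclideanSpace ℝ (Fin n))) (nhds 0) := by
    have := ((tendsto_rpow_neg_atTop hτ).const_mul (C/τ)).comp (tendsto_norm_cocompact_atTop (E := EuclideanSpace ℝ (Fin n)))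
    simpa [Function.comp_def] using this
  have hz : Tendsto (fun x => h x - A e0 he0) (cocompact (EuclideanSpace ℝ (Fin n))) (nhds 0) := by
    apply squeeze_zero_norm' ?_ h0
    filter_upwards [(tendsto_norm_cocompact_atTop (E := EuclideanSpace ℝ (Fin n))).eventually_ge_atTop R] with x hx
    simpa [Real.norm_eq_abs] using bound x hx
  have := hz.add_const (A e0 he0)
  simpa using this
end

section
/- Let n ≥ 2, R > 0, τ > 0 and C ≥ 0. Let h : ℝⁿ → ℝ be differentiable at every point of E_R and satisfy ‖Dh(x)‖ ≤ C‖x‖^(−τ−1) for all x ∈ E_R. Then for every r ≥ R and all points x, z ∈ ℝⁿ with ‖x‖ = ‖z‖ = r, one has |h(x) − h(z)| ≤ π·C·r^(−τ). -/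
set_option maxHeartbeats 1000000


open MeasureTheory Filter Metric

open scoped RealInnerProductSpace

private lemma norm_combo_aux {n : ℕ} (x w : EuclideanSpace ℝ (Fin n)) {r : ℝ} (hr : 0 ≤ r)
    (hx : ‖x‖ = r) (hw : ‖w‖ = r) (hxw : ⟪x, w⟫ = 0) (a b : ℝ) (hab : a ^ 2 + b ^ 2 = 1) :
    ‖a • x + b • w‖ = r := by
  have hsq : ‖a • x + b • w‖ ^ 2 = r ^ 2 := by
    rw [norm_add_sq_real, real_inner_smul_left, real_inner_smul_right, hxw, norm_smul, norm_smul,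
      hx, hw]
    have h1 : |a| ^ 2 = a ^ 2 := sq_abs a
    have h2 : |b| ^ 2 = b ^ 2 := sq_abs b
    simp only [Real.norm_eq_abs]
    nlinarith [sq_abs a, sq_abs b]
  calc ‖a • x + b • w‖ = Real.sqrt (‖a • x + b • w‖ ^ 2) := (Real.sqrt_sq (norm_nonneg _)).symm
    _ = Real.sqrt (r ^ 2) := by rw [hsq]
    _ = r := Real.sqrt_sq hr

private lemma arc_estimate (n : ℕ) (R τ C : ℝ)
    (hR : 0 < R) (hC : 0 ≤ C)
    (h : EuclideanSpace ℝ (Fin n) → ℝ)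
    (hdiff : ∀ x : EuclideanSpace ℝ (Fin n), R ≤ ‖x‖ → DifferentiableAt ℝ h x)
    (hbound : ∀ x : EuclideanSpace ℝ (Fin n), R ≤ ‖x‖ →
      ‖fderiv ℝ h x‖ ≤ C * ‖x‖ ^ (-τ - 1))
    (r : ℝ) (hr : R ≤ r) (x w : EuclideanSpace ℝ (Fin n))
    (hx : ‖x‖ = r) (hw : ‖w‖ = r) (hxw : ⟪x, w⟫ = 0)
    (θ : ℝ) (hθ0 : 0 ≤ θ) (hθπ : θ ≤ Real.pi) :
    |h (Real.cos θ • x + Real.sin θ • w) - h x| ≤ Real.pi * C * r ^ (-τ) := by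
  have hrpos : 0 < r := lt_of_lt_of_le hR hr
  set γ : ℝ → EuclideanSpace ℝ (Fin n) := fun t => Real.cos t • x + Real.sin t • w with hγ
  set γ' : ℝ → EuclideanSpace ℝ (Fin n) := fun t => (-Real.sin t) • x + Real.cos t • w with hγ'
  have hγnorm : ∀ t, ‖γ t‖ = r := fun t =>
    norm_combo_aux x w hrpos.le hx hw hxw _ _ (by rw [← Real.sin_sq_add_cos_sq t]; ring)
  have hγ'norm : ∀ t, ‖γ' t‖ = r := fun t =>
    norm_combo_aux x w hrpos.le hx hw hxw _ _ (by rw [← Real.sin_sq_add_cos_sq t]; ring)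
  have hγd : ∀ t, HasDerivAt γ (γ' t) t := fun t =>
    ((Real.hasDerivAt_cos t).smul_const x).add ((Real.hasDerivAt_sin t).smul_const w)
  have hgd : ∀ t, HasDerivAt (fun s => h (γ s)) (fderiv ℝ h (γ t) (γ' t)) t := fun t =>
    ((hdiff (γ t) (by rw [hγnorm]; exact hr)).hasFDerivAt).comp_hasDerivAt t (hγd t)
  have hrpow : r ^ (-τ - 1) * r = r ^ (-τ) := by
    rw [← Real.rpow_add_one hrpos.ne' (-τ - 1)]
    norm_num
  have hbd : ∀ t ∈ Set.Ico (0 : ℝ) θ, ‖fderiv ℝ h (γ t) (γ' t)‖ ≤ C * r ^ (-τ) := by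
    intro t _
    calc ‖fderiv ℝ h (γ t) (γ' t)‖ ≤ ‖fderiv ℝ h (γ t)‖ * ‖γ' t‖ :=
          (fderiv ℝ h (γ t)).le_opNorm _
      _ ≤ C * ‖γ t‖ ^ (-τ - 1) * r := by
          rw [hγ'norm]
          exact mul_le_mul_of_nonneg_right (hbound (γ t) (by rw [hγnorm]; exact hr)) hrpos.le
      _ = C * r ^ (-τ) := by rw [hγnorm, mul_assoc, hrpow]
  have key := norm_image_sub_le_of_norm_deriv_le_segment'
    (f := fun s => h (γ s)) (f' := fun t => fderiv ℝ h (γ t) (γ' t)) (a := 0) (b := θ)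
    (fun t _ => (hgd t).hasDerivWithinAt) hbd θ (Set.right_mem_Icc.2 hθ0)
  have hγ0 : γ 0 = x := by simp [hγ]
  simp only [hγ0, sub_zero, Real.norm_eq_abs] at key
  have hCr : 0 ≤ C * r ^ (-τ) := by positivity
  calc |h (γ θ) - h x| ≤ C * r ^ (-τ) * θ := key
    _ ≤ C * r ^ (-τ) * Real.pi := mul_le_mul_of_nonneg_left hθπ hCr
    _ = Real.pi * C * r ^ (-τ) := by ring

/-- estimate (eqlem4a) in the proof of Lemma 4. If `h : ℝⁿ → ℝ`
(with `n ≥ 2`) is differentiable on `E_R = {‖x‖ ≥ R}` with `‖Dh(x)‖ ≤ C‖x‖^(-τ-1)`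
there, then for any two points `x, z` on a common sphere of radius `r ≥ R` one has
`|h x - h z| ≤ π C r^(-τ)`. -/
theorem lemma4_tangential_estimate (n : ℕ) (hn : 2 ≤ n) (R τ C : ℝ)
    (hR : 0 < R) (hτ : 0 < τ) (hC : 0 ≤ C)
    (h : EuclideanSpace ℝ (Fin n) → ℝ)
    (hdiff : ∀ x : EuclideanSpace ℝ (Fin n), R ≤ ‖x‖ → DifferentiableAt ℝ h x)
    (hbound : ∀ x : EuclideanSpace ℝ (Fin n), R ≤ ‖x‖ →
      ‖fderiv ℝ h x‖ ≤ C * ‖x‖ ^ (-τ - 1)) :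
    ∀ r : ℝ, R ≤ r → ∀ x z : EuclideanSpace ℝ (Fin n), ‖x‖ = r → ‖z‖ = r →
      |h x - h z| ≤ Real.pi * C * r ^ (-τ) := by
  intro r hr x z hxr hzr
  have hrpos : 0 < r := lt_of_lt_of_le hR hr
  have hrhs : 0 ≤ Real.pi * C * r ^ (-τ) := by positivity
  have hxne : x ≠ 0 := by
    intro h0; rw [h0, norm_zero] at hxr; exact hrpos.ne hxr
  by_cases hzx : z = x
  · rw [hzx, sub_self, abs_zero]; exact hrhs
  by_cases hzx' : z = -x
  · -- antipodal case: pick any unit vector orthogonal to x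
    have hfr : Module.finrank ℝ (ℝ ∙ x)ᗮ ≠ 0 := by
      have h1 : Module.finrank ℝ (ℝ ∙ x) = 1 := finrank_span_singleton hxne
      have h2 := Submodule.finrank_add_finrank_orthogonal (K := (ℝ ∙ x))
      rw [h1, finrank_euclideanSpace_fin] at h2
      omega
    have hne : ((ℝ ∙ x)ᗮ : Submodule ℝ (EuclideanSpace ℝ (Fin n))) ≠ ⊥ := by
      intro hb; rw [hb, finrank_bot] at hfr; exact hfr rfl
    obtain ⟨w0, hw0mem, hw0ne⟩ := Submodule.exists_mem_ne_zero_of_ne_bot hne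
    have hw0pos : 0 < ‖w0‖ := norm_pos_iff.2 hw0ne
    set w : EuclideanSpace ℝ (Fin n) := (r / ‖w0‖) • w0 with hwdef
    have hwnorm : ‖w‖ = r := by
      rw [hwdef, norm_smul, Real.norm_eq_abs, abs_of_pos (div_pos hrpos hw0pos),
        div_mul_cancel₀ _ hw0pos.ne']
    have hxw : ⟪x, w⟫ = 0 := by
      have := Submodule.mem_orthogonal_singleton_iff_inner_right.1 hw0mem
      rw [hwdef, real_inner_smul_right, this, mul_zero]
    have key := arc_estimate n R τ C hR hC h hdiff hbound r hr x w hxr hwnorm hxw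
      Real.pi Real.pi_pos.le le_rfl
    rw [Real.cos_pi, Real.sin_pi] at key
    simp only [neg_one_smul, zero_smul, add_zero] at key
    rw [← hzx'] at key
    rwa [abs_sub_comm]
  · -- generic case
    set c : ℝ := ⟪x, z⟫ / r ^ 2 with hcdef
    have hinner : ⟪x, z⟫ = c * r ^ 2 := by
      rw [hcdef]; field_simp
    have hcabs : |c| ≤ 1 := by
      have h1 : |⟪x, z⟫| ≤ r ^ 2 := by
        calc |⟪x, z⟫| ≤ ‖x‖ * ‖z‖ := abs_real_inner_le_norm x z
          _ = r ^ 2 := by rw [hxr, hzr]; ring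
      rw [hcdef, abs_div, abs_of_pos (by positivity : (0:ℝ) < r ^ 2)]
      rw [div_le_one (by positivity)]
      exact h1
    have hc1 : -1 ≤ c := neg_le_of_abs_le hcabs
    have hc2 : c ≤ 1 := le_of_abs_le hcabs
    set θ : ℝ := Real.arccos c with hθdef
    have hcosθ : Real.cos θ = c := Real.cos_arccos hc1 hc2
    have hsinθ : Real.sin θ = Real.sqrt (1 - c ^ 2) := Real.sin_arccos c
    set u : EuclideanSpace ℝ (Fin n) := z - c • x with hudef
    have hxx : ⟪x, x⟫ = r ^ 2 := by
      rw [real_inner_self_eq_norm_sq, hxr]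
    have hinner' : ⟪z, x⟫ = c * r ^ 2 := by rw [real_inner_comm]; exact hinner
    have husq : ‖u‖ ^ 2 = r ^ 2 * (1 - c ^ 2) := by
      rw [hudef, norm_sub_sq_real, real_inner_smul_right, hinner',
        norm_smul, Real.norm_eq_abs, hzr, hxr]
      nlinarith [sq_abs c]
    have hsinne : Real.sin θ ≠ 0 := by
      intro hs
      rw [hsinθ] at hs
      have h1c : 1 - c ^ 2 = 0 := by
        have := Real.sqrt_eq_zero (by nlinarith [sq_abs c, abs_nonneg c] : (0:ℝ) ≤ 1 - c ^ 2)
        exact this.1 hs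
      have hu0 : u = 0 := by
        have : ‖u‖ ^ 2 = 0 := by rw [husq, h1c, mul_zero]
        have : ‖u‖ = 0 := by nlinarith [norm_nonneg u]
        exact norm_eq_zero.1 this
      have hz : z = c • x := by
        have := sub_eq_zero.1 (hudef ▸ hu0)
        exact this
      have : (c - 1) * (c + 1) = 0 := by nlinarith
      rcases mul_eq_zero.1 this with h' | h'
      · have : c = 1 := by linarith
        rw [this, one_smul] at hz; exact hzx hz
      · have : c = -1 := by linarith
        rw [this] at hz
        simp only [neg_smul, one_smul] at hz
        exact hzx' hz
    have hθ0 : 0 ≤ θ := Real.arccos_nonneg c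
    have hθπ : θ ≤ Real.pi := Real.arccos_le_pi c
    have hsinpos : 0 < Real.sin θ :=
      lt_of_le_of_ne (Real.sin_nonneg_of_nonneg_of_le_pi hθ0 hθπ) (Ne.symm hsinne)
    have hsinsq : Real.sin θ ^ 2 = 1 - c ^ 2 := by
      rw [hsinθ, Real.sq_sqrt (by nlinarith [sq_abs c, abs_nonneg c] : (0:ℝ) ≤ 1 - c ^ 2)]
    have hunorm : ‖u‖ = r * Real.sin θ := by
      have h1 : ‖u‖ ^ 2 = (r * Real.sin θ) ^ 2 := by rw [husq, ← hsinsq]; ring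
      have h2 : 0 ≤ r * Real.sin θ := by positivity
      nlinarith [norm_nonneg u]
    set w : EuclideanSpace ℝ (Fin n) := (Real.sin θ)⁻¹ • u with hwdef
    have hwnorm : ‖w‖ = r := by
      rw [hwdef, norm_smul, Real.norm_eq_abs, abs_of_pos (inv_pos.2 hsinpos), hunorm]
      field_simp
    have hxw : ⟪x, w⟫ = 0 := by
      rw [hwdef, real_inner_smul_right, hudef, inner_sub_right, real_inner_smul_right,
        hinner, hxx]
      ring
    have hz : z = Real.cos θ • x + Real.sin θ • w := by
      rw [hcosθ, hwdef, smul_inv_smul₀ hsinne, hudef]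
      abel
    have key := arc_estimate n R τ C hR hC h hdiff hbound r hr x w hxr hwnorm hxw
      θ hθ0 hθπ
    rw [← hz] at key
    rwa [abs_sub_comm]
end

section
/- Let n ≥ 2, R > 0, τ > 0 and C ≥ 0. Let h : ℝⁿ → ℝ be differentiable at every point of E_R and satisfy ‖Dh(x)‖ ≤ C‖x‖^(−τ−1) for all x ∈ E_R. Then for every R₁ ≥ R and all x, y ∈ ℝⁿ with R₁ ≤ ‖x‖ ≤ ‖y‖, one has |h(x) − h(y)| ≤ (π + 1/τ)·C·R₁^(−τ). In particular h satisfies the Cauchy criterion at infinity. -/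
open MeasureTheory Filter Metric
open scoped RealInnerProductSpace

section aux

variable {n : ℕ}

/-- Radial estimate. -/
lemma lemma4_osc_radial (R τ C : ℝ) (hR : 0 < R) (hτ : 0 < τ)
    (h : EuclideanSpace ℝ (Fin n) → ℝ)
    (hdiff : ∀ x : EuclideanSpace ℝ (Fin n), R ≤ ‖x‖ → DifferentiableAt ℝ h x)
    (hbound : ∀ x : EuclideanSpace ℝ (Fin n), R ≤ ‖x‖ →
      ‖fderiv ℝ h x‖ ≤ C * ‖x‖ ^ (-τ - 1))
    (u : EuclideanSpace ℝ (Fin n)) (hu : ‖u‖ = 1) {a b : ℝ}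
    (ha : R ≤ a) (hab : a ≤ b) :
    |h (b • u) - h (a • u)| ≤ C / τ * (a ^ (-τ) - b ^ (-τ)) := by
  have hnorm : ∀ r : ℝ, R ≤ r → ‖r • u‖ = r := fun r hr => by
    rw [norm_smul, hu, mul_one, Real.norm_eq_abs, abs_of_pos (hR.trans_le hr)]
  have hd : ∀ r, R ≤ r → HasDerivAt (fun s : ℝ => h (s • u))
      (fderiv ℝ h (r • u) u) r := by
    intro r hr
    have h1 : HasDerivAt (fun s : ℝ => s • u) u r := by
      simpa using (hasDerivAt_id r).smul_const u
    exact ((hdiff _ (by rw [hnorm r hr]; exact hr)).hasFDerivAt).comp_hasDerivAt r h1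
  have key : ∀ r ∈ Set.Icc a b,
      ‖h (r • u) - h (a • u)‖ ≤ C / τ * (a ^ (-τ) - r ^ (-τ)) := by
    apply image_norm_le_of_norm_deriv_right_le_deriv_boundary'
      (f := fun s => h (s • u) - h (a • u))
      (f' := fun r => fderiv ℝ h (r • u) u)
      (B := fun s => C / τ * (a ^ (-τ) - s ^ (-τ)))
      (B' := fun r => C * r ^ (-τ - 1))
    · intro r hr
      exact (((hd r (ha.trans hr.1)).continuousAt).continuousWithinAt).sub
        continuousWithinAt_const
    · intro r hr
      exact ((hd r (ha.trans hr.1)).sub_const _).hasDerivWithinAt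
    · simp
    · intro r hr
      have hr0 : r ≠ 0 := (hR.trans_le (ha.trans hr.1)).ne'
      exact (continuousWithinAt_const.sub
        (Real.continuousAt_rpow_const r (-τ) (Or.inl hr0)).continuousWithinAt).const_mul _
    · intro r hr
      have hr0 : r ≠ 0 := (hR.trans_le (ha.trans hr.1)).ne'
      have h2 : HasDerivAt (fun s : ℝ => C / τ * (a ^ (-τ) - s ^ (-τ)))
          (C / τ * (0 - (-τ * r ^ (-τ - 1)))) r :=
        ((hasDerivAt_const r (a ^ (-τ))).sub
          (Real.hasDerivAt_rpow_const (Or.inl hr0))).const_mul _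
      have h3 : C / τ * (0 - (-τ * r ^ (-τ - 1))) = C * r ^ (-τ - 1) := by
        field_simp; ring
      rw [h3] at h2
      exact h2.hasDerivWithinAt
    · intro r hr
      have hRr : R ≤ r := ha.trans hr.1
      calc ‖fderiv ℝ h (r • u) u‖ ≤ ‖fderiv ℝ h (r • u)‖ * ‖u‖ :=
            (fderiv ℝ h (r • u)).le_opNorm u
        _ ≤ C * ‖r • u‖ ^ (-τ - 1) * 1 := by
            rw [hu]
            exact mul_le_mul_of_nonneg_right
              (hbound _ (by rw [hnorm r hRr]; exact hRr)) zero_le_one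
        _ = C * r ^ (-τ - 1) := by rw [mul_one, hnorm r hRr]
  simpa [Real.norm_eq_abs] using key b ⟨hab, le_refl b⟩

/-- Tangential (great-circle) estimate. -/
lemma lemma4_osc_tangential (R τ C : ℝ) (hR : 0 < R) (hτ : 0 < τ) (hC : 0 ≤ C)
    (h : EuclideanSpace ℝ (Fin n) → ℝ)
    (hdiff : ∀ x : EuclideanSpace ℝ (Fin n), R ≤ ‖x‖ → DifferentiableAt ℝ h x)
    (hbound : ∀ x : EuclideanSpace ℝ (Fin n), R ≤ ‖x‖ →
      ‖fderiv ℝ h x‖ ≤ C * ‖x‖ ^ (-τ - 1))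
    (u w : EuclideanSpace ℝ (Fin n)) (hu : ‖u‖ = 1) (hw : ‖w‖ = 1)
    (huw : ⟪u, w⟫ = 0) {S θ : ℝ} (hS : R ≤ S) (hθ0 : 0 ≤ θ)
    (hθπ : θ ≤ Real.pi) :
    |h ((S * Real.cos θ) • u + (S * Real.sin θ) • w) - h (S • u)|
      ≤ Real.pi * C * S ^ (-τ) := by
  have hS0 : 0 < S := hR.trans_le hS
  have hnorm : ∀ a b : ℝ, a ^ 2 + b ^ 2 = S ^ 2 → ‖a • u + b • w‖ = S := by
    intro a b hab
    have h2 : ‖a • u + b • w‖ ^ 2 = S ^ 2 := by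
      rw [norm_add_sq_real, norm_smul, norm_smul, real_inner_smul_left,
        real_inner_smul_right, huw, hu, hw]
      simpa [Real.norm_eq_abs, mul_pow, sq_abs] using hab
    calc ‖a • u + b • w‖ = Real.sqrt (‖a • u + b • w‖ ^ 2) :=
          (Real.sqrt_sq (norm_nonneg _)).symm
      _ = S := by rw [h2, Real.sqrt_sq hS0.le]
  set γ : ℝ → EuclideanSpace ℝ (Fin n) :=
    fun t => (S * Real.cos t) • u + (S * Real.sin t) • w with hγ
  set γ' : ℝ → EuclideanSpace ℝ (Fin n) :=
    fun t => (S * -Real.sin t) • u + (S * Real.cos t) • w with hγ'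
  have hγn : ∀ t, ‖γ t‖ = S := fun t => hnorm _ _ (by
    have := Real.sin_sq_add_cos_sq t; nlinarith)
  have hγ'n : ∀ t, ‖γ' t‖ = S := fun t => hnorm _ _ (by
    have := Real.sin_sq_add_cos_sq t; nlinarith)
  have hdγ : ∀ t, HasDerivAt γ (γ' t) t := by
    intro t
    exact (((Real.hasDerivAt_cos t).const_mul S).smul_const u).add
      (((Real.hasDerivAt_sin t).const_mul S).smul_const w)
  have hd : ∀ t, HasDerivAt (fun s => h (γ s)) (fderiv ℝ h (γ t) (γ' t)) t := by
    intro t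
    exact ((hdiff _ (by rw [hγn t]; exact hS)).hasFDerivAt).comp_hasDerivAt t (hdγ t)
  have bound : ∀ t ∈ Set.Ico (0 : ℝ) θ, ‖fderiv ℝ h (γ t) (γ' t)‖ ≤ C * S ^ (-τ) := by
    intro t _
    calc ‖fderiv ℝ h (γ t) (γ' t)‖ ≤ ‖fderiv ℝ h (γ t)‖ * ‖γ' t‖ :=
          (fderiv ℝ h (γ t)).le_opNorm _
      _ ≤ C * ‖γ t‖ ^ (-τ - 1) * S := by
          rw [hγ'n t]
          exact mul_le_mul_of_nonneg_right (hbound _ (by rw [hγn t]; exact hS)) hS0.le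
      _ = C * S ^ (-τ) := by
          rw [hγn t, show -τ - 1 = -τ - 1 from rfl,
            Real.rpow_sub_one hS0.ne' (-τ)]
          field_simp
  have key := norm_image_sub_le_of_norm_deriv_le_segment'
    (f := fun s => h (γ s)) (f' := fun t => fderiv ℝ h (γ t) (γ' t))
    (fun t _ => (hd t).hasDerivWithinAt) bound θ ⟨hθ0, le_refl θ⟩
  have hγ0 : γ 0 = S • u := by simp [hγ]
  have hS' : 0 ≤ C * S ^ (-τ) := by positivity
  have : |h (γ θ) - h (γ 0)| ≤ C * S ^ (-τ) * θ := by
    simpa [Real.norm_eq_abs] using key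
  rw [hγ0] at this
  calc |h ((S * Real.cos θ) • u + (S * Real.sin θ) • w) - h (S • u)|
      ≤ C * S ^ (-τ) * θ := this
    _ ≤ C * S ^ (-τ) * Real.pi := by
        exact mul_le_mul_of_nonneg_left hθπ hS'
    _ = Real.pi * C * S ^ (-τ) := by ring

/-- Existence of a unit vector orthogonal to `u` (uses `2 ≤ n`). -/
lemma lemma4_exists_perp (hn : 2 ≤ n) (u : EuclideanSpace ℝ (Fin n)) :
    ∃ w : EuclideanSpace ℝ (Fin n), ‖w‖ = 1 ∧ ⟪u, w⟫ = 0 := by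
  have hspan : Module.finrank ℝ (ℝ ∙ u) ≤ 1 := by
    rcases eq_or_ne u 0 with rfl | hu0
    · rw [Submodule.span_zero_singleton]; simp
    · rw [finrank_span_singleton hu0]
  have hfr : 0 < Module.finrank ℝ ((ℝ ∙ u)ᗮ : Submodule ℝ (EuclideanSpace ℝ (Fin n))) := by
    have := Submodule.finrank_add_finrank_orthogonal (𝕜 := ℝ) (ℝ ∙ u)
    rw [finrank_euclideanSpace_fin] at this
    omega
  obtain ⟨⟨p, hpK⟩, hp0⟩ := Module.finrank_pos_iff_exists_ne_zero.mp hfr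
  have hp0' : p ≠ 0 := by simpa [Submodule.mk_eq_zero] using hp0
  refine ⟨‖p‖⁻¹ • p, norm_smul_inv_norm hp0', ?_⟩
  have hup : ⟪u, p⟫ = 0 := hpK u (Submodule.mem_span_singleton_self u)
  rw [real_inner_smul_right, hup, mul_zero]

/-- Decomposition of a unit vector `v` as `cos θ • u + sin θ • w`. -/
lemma lemma4_decomp (hn : 2 ≤ n) (u v : EuclideanSpace ℝ (Fin n))
    (hu : ‖u‖ = 1) (hv : ‖v‖ = 1) :
    ∃ (w : EuclideanSpace ℝ (Fin n)) (θ : ℝ), ‖w‖ = 1 ∧ ⟪u, w⟫ = 0 ∧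
      0 ≤ θ ∧ θ ≤ Real.pi ∧ v = Real.cos θ • u + Real.sin θ • w := by
  set c : ℝ := ⟪u, v⟫ with hc
  have hc1 : |c| ≤ 1 := by
    have := abs_real_inner_le_norm u v
    rwa [hu, hv, one_mul] at this
  set θ : ℝ := Real.arccos c with hθ
  have hcos : Real.cos θ = c := Real.cos_arccos (abs_le.mp hc1).1 (abs_le.mp hc1).2
  have hsin : Real.sin θ = Real.sqrt (1 - c ^ 2) := Real.sin_arccos c
  set p : EuclideanSpace ℝ (Fin n) := v - c • u with hp
  have hvu : ⟪v, u⟫ = c := by rw [hc]; exact real_inner_comm u v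
  have hp2 : ‖p‖ ^ 2 = 1 - c ^ 2 := by
    rw [hp, norm_sub_sq_real, real_inner_smul_right, hvu, norm_smul, hu, hv]
    simp only [Real.norm_eq_abs, mul_pow, sq_abs, one_pow, mul_one]
    ring
  have hpnorm : ‖p‖ = Real.sin θ := by
    rw [hsin, ← hp2, Real.sqrt_sq (norm_nonneg _)]
  rcases eq_or_ne p 0 with hp0 | hp0
  · obtain ⟨w, hw1, hw2⟩ := lemma4_exists_perp hn u
    refine ⟨w, θ, hw1, hw2, Real.arccos_nonneg c, Real.arccos_le_pi c, ?_⟩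
    have hsin0 : Real.sin θ = 0 := by rw [← hpnorm, hp0, norm_zero]
    have hvc : v = c • u := by
      have := hp0; rw [hp, sub_eq_zero] at this; exact this
    rw [hsin0, hcos, zero_smul, add_zero, hvc]
  · refine ⟨‖p‖⁻¹ • p, θ, norm_smul_inv_norm hp0, ?_, Real.arccos_nonneg c,
      Real.arccos_le_pi c, ?_⟩
    · have hup : ⟪u, p⟫ = 0 := by
        rw [hp, inner_sub_right, real_inner_smul_right, real_inner_self_eq_norm_sq,
          hu, ← hc]
        ring
      rw [real_inner_smul_right, hup, mul_zero]
    · rw [hcos, hpnorm.symm, smul_smul, mul_inv_cancel₀ (norm_ne_zero_iff.mpr hp0),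
        one_smul, hp]
      abel

end aux

/-- uniform oscillation estimate in the proof of Lemma 4. If
`h : ℝⁿ → ℝ` (with `n ≥ 2`) is differentiable on `E_R = {‖x‖ ≥ R}` with
`‖Dh(x)‖ ≤ C‖x‖^(-τ-1)` there, then for all `R₁ ≥ R` and all `x, y` with
`R₁ ≤ ‖x‖ ≤ ‖y‖` one has `|h x - h y| ≤ (π + 1/τ) C R₁^(-τ)`; in particular `h`
satisfies the Cauchy criterion at infinity. -/
theorem lemma4_oscillation_estimate (n : ℕ) (hn : 2 ≤ n) (R τ C : ℝ)
    (hR : 0 < R) (hτ : 0 < τ) (hC : 0 ≤ C)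
    (h : EuclideanSpace ℝ (Fin n) → ℝ)
    (hdiff : ∀ x : EuclideanSpace ℝ (Fin n), R ≤ ‖x‖ → DifferentiableAt ℝ h x)
    (hbound : ∀ x : EuclideanSpace ℝ (Fin n), R ≤ ‖x‖ →
      ‖fderiv ℝ h x‖ ≤ C * ‖x‖ ^ (-τ - 1)) :
    (∀ R₁ : ℝ, R ≤ R₁ → ∀ x y : EuclideanSpace ℝ (Fin n),
        R₁ ≤ ‖x‖ → ‖x‖ ≤ ‖y‖ →
        |h x - h y| ≤ (Real.pi + 1 / τ) * C * R₁ ^ (-τ)) ∧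
    Cauchy (Filter.map h (cocompact (EuclideanSpace ℝ (Fin n)))) := by
  have main : ∀ R₁ : ℝ, R ≤ R₁ → ∀ x y : EuclideanSpace ℝ (Fin n),
      R₁ ≤ ‖x‖ → ‖x‖ ≤ ‖y‖ →
      |h x - h y| ≤ (Real.pi + 1 / τ) * C * R₁ ^ (-τ) := by
    intro R₁ hRR₁ x y hR₁x hxy
    have hR₁0 : 0 < R₁ := hR.trans_le hRR₁
    have hx0 : 0 < ‖x‖ := hR₁0.trans_le hR₁x
    have hy0 : 0 < ‖y‖ := hx0.trans_le hxy
    have hRx : R ≤ ‖x‖ := hRR₁.trans hR₁x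
    have hRy : R ≤ ‖y‖ := hRx.trans hxy
    have hxne : x ≠ 0 := norm_pos_iff.mp hx0
    have hyne : y ≠ 0 := norm_pos_iff.mp hy0
    set u : EuclideanSpace ℝ (Fin n) := ‖x‖⁻¹ • x with hu_def
    set v : EuclideanSpace ℝ (Fin n) := ‖y‖⁻¹ • y with hv_def
    have hu : ‖u‖ = 1 := norm_smul_inv_norm hxne
    have hv : ‖v‖ = 1 := norm_smul_inv_norm hyne
    have hxu : ‖x‖ • u = x := by
      rw [hu_def, smul_smul, mul_inv_cancel₀ hx0.ne', one_smul]
    have hyv : ‖y‖ • v = y := by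
      rw [hv_def, smul_smul, mul_inv_cancel₀ hy0.ne', one_smul]
    obtain ⟨w, θ, hw, huw, hθ0, hθπ, hvdec⟩ := lemma4_decomp hn u v hu hv
    have rad := lemma4_osc_radial R τ C hR hτ h hdiff hbound u hu hRx hxy
    have tan := lemma4_osc_tangential R τ C hR hτ hC h hdiff hbound u w hu hw huw
      hRy hθ0 hθπ
    have hy_eq : y = (‖y‖ * Real.cos θ) • u + (‖y‖ * Real.sin θ) • w := by
      conv_lhs => rw [← hyv, hvdec]
      simp only [smul_add, smul_smul, mul_assoc]
    have hhx : h x = h (‖x‖ • u) := by rw [hxu]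
    have hhy : h y = h ((‖y‖ * Real.cos θ) • u + (‖y‖ * Real.sin θ) • w) :=
      congrArg h hy_eq
    have tri : |h x - h y| ≤ |h (‖y‖ • u) - h (‖x‖ • u)| +
        |h ((‖y‖ * Real.cos θ) • u + (‖y‖ * Real.sin θ) • w) - h (‖y‖ • u)| := by
      rw [hhx, hhy]
      calc |h (‖x‖ • u) - h ((‖y‖ * Real.cos θ) • u + (‖y‖ * Real.sin θ) • w)|
          ≤ |h (‖x‖ • u) - h (‖y‖ • u)| +
            |h (‖y‖ • u) - h ((‖y‖ * Real.cos θ) • u + (‖y‖ * Real.sin θ) • w)| :=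
            abs_sub_le _ _ _
        _ = |h (‖y‖ • u) - h (‖x‖ • u)| +
            |h ((‖y‖ * Real.cos θ) • u + (‖y‖ * Real.sin θ) • w) - h (‖y‖ • u)| := by
            rw [abs_sub_comm (h (‖x‖ • u)) (h (‖y‖ • u)),
              abs_sub_comm (h (‖y‖ • u))
                (h ((‖y‖ * Real.cos θ) • u + (‖y‖ * Real.sin θ) • w))]
    have hXZ : ‖x‖ ^ (-τ) ≤ R₁ ^ (-τ) :=
      Real.rpow_le_rpow_of_nonpos hR₁0 hR₁x (neg_nonpos.mpr hτ.le)
    have hYZ : ‖y‖ ^ (-τ) ≤ R₁ ^ (-τ) :=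
      Real.rpow_le_rpow_of_nonpos hR₁0 (hR₁x.trans hxy) (neg_nonpos.mpr hτ.le)
    have hY0 : (0:ℝ) ≤ ‖y‖ ^ (-τ) := Real.rpow_nonneg hy0.le _
    have hπ : (0:ℝ) < Real.pi := Real.pi_pos
    have hCτ : 0 ≤ C / τ := div_nonneg hC hτ.le
    calc |h x - h y| ≤ |h (‖y‖ • u) - h (‖x‖ • u)| +
        |h ((‖y‖ * Real.cos θ) • u + (‖y‖ * Real.sin θ) • w) - h (‖y‖ • u)| := tri
      _ ≤ C / τ * (‖x‖ ^ (-τ) - ‖y‖ ^ (-τ)) + Real.pi * C * ‖y‖ ^ (-τ) := by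
          gcongr
      _ ≤ (Real.pi + 1 / τ) * C * R₁ ^ (-τ) := by
          have h1 : C / τ * (‖x‖ ^ (-τ) - ‖y‖ ^ (-τ)) ≤ C / τ * R₁ ^ (-τ) := by
            apply mul_le_mul_of_nonneg_left _ hCτ
            linarith
          have h2 : Real.pi * C * ‖y‖ ^ (-τ) ≤ Real.pi * C * R₁ ^ (-τ) :=
            mul_le_mul_of_nonneg_left hYZ (by positivity)
          have : C / τ * R₁ ^ (-τ) + Real.pi * C * R₁ ^ (-τ)
              = (Real.pi + 1 / τ) * C * R₁ ^ (-τ) := by ring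
          linarith
  refine ⟨main, ?_⟩
  -- Cauchy criterion at infinity
  haveI : Nonempty (Fin n) := ⟨⟨0, by omega⟩⟩
  haveI : Nontrivial (EuclideanSpace ℝ (Fin n)) := by
    refine ⟨EuclideanSpace.single ⟨0, by omega⟩ (1:ℝ), 0, ?_⟩
    intro hcontra
    have := congrArg (fun z => ‖z‖) hcontra
    simp [EuclideanSpace.norm_single] at this
  rw [Metric.cauchy_iff]
  constructor
  · exact Filter.map_neBot
  · intro ε hε
    -- choose R₁ ≥ R with (π + 1/τ) * C * R₁ ^ (-τ) < ε
    have hKpos : 0 < Real.pi + 1 / τ := by positivity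
    obtain ⟨R₁, hRR₁, hbd⟩ : ∃ R₁ : ℝ, R ≤ R₁ ∧
        (Real.pi + 1 / τ) * C * R₁ ^ (-τ) < ε := by
      rcases eq_or_lt_of_le hC with hC0 | hCpos
      · exact ⟨R, le_refl R, by rw [← hC0]; simpa using hε⟩
      · have hK : 0 < (Real.pi + 1 / τ) * C := mul_pos hKpos hCpos
        have hev : ∀ᶠ r : ℝ in atTop, r ^ (-τ) < ε / ((Real.pi + 1 / τ) * C) :=
          (tendsto_rpow_neg_atTop hτ).eventually
            (gt_mem_nhds (by positivity))
        obtain ⟨R₁, hR₁R, hR₁e⟩ := ((eventually_ge_atTop R).and hev).exists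
        refine ⟨R₁, hR₁R, ?_⟩
        rw [← lt_div_iff₀' hK]
        exact hR₁e
    refine ⟨h '' {z : EuclideanSpace ℝ (Fin n) | R₁ ≤ ‖z‖}, ?_, ?_⟩
    · rw [Filter.mem_map, Filter.mem_cocompact]
      refine ⟨closedBall 0 R₁, isCompact_closedBall 0 R₁, ?_⟩
      intro z hz
      have : R₁ ≤ ‖z‖ := by
        simp only [Set.mem_compl_iff, mem_closedBall, dist_zero_right, not_le] at hz
        exact hz.le
      exact Set.mem_preimage.mpr ⟨z, this, rfl⟩
    · rintro a ⟨p, hp, rfl⟩ b ⟨q, hq, rfl⟩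
      rcases le_total ‖p‖ ‖q‖ with hpq | hqp
      · calc dist (h p) (h q) = |h p - h q| := Real.dist_eq _ _
          _ ≤ (Real.pi + 1 / τ) * C * R₁ ^ (-τ) := main R₁ hRR₁ p q hp hpq
          _ < ε := hbd
      · have hd : dist (h p) (h q) = |h q - h p| := by
          rw [Real.dist_eq, abs_sub_comm (h p) (h q)]
        calc dist (h p) (h q) = |h q - h p| := hd
          _ ≤ (Real.pi + 1 / τ) * C * R₁ ^ (-τ) := main R₁ hRR₁ q p hq hqp
          _ < ε := hbd
end

section
/- Let n ≥ 2, R > 0, C ≥ 0, ε > 0 and τ > 0 with 2τ > n − 2. Let f : ℝⁿ → ℝ be continuously differentiable on E_R with f(x) ≥ ε, |f(x) − 1| ≤ C‖x‖^(−τ) and ‖∇f(x)‖ ≤ C‖x‖^(−τ−1) for all x ∈ E_R. Then ∫_{S_r} (1/f(x))·⟨∇f(x), ν(x)⟩ dσ(x) − ∫_{S_r} ⟨∇f(x), ν(x)⟩ dσ(x) tends to 0 as r → ∞; in particular, if one of the two families of sphere integrals converges as r → ∞, then so does the other, and to the same limit. -/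
open MeasureTheory Filter Metric


open Module
open scoped ENNReal NNReal Pointwise


lemma aux1 (n : ℕ) (hn : 1 ≤ n) (K : Set (EuclideanSpace ℝ (Fin n)))
    (hK : IsCompact K)
    (hK0 : ∀ x ∈ K, x (⟨0, hn⟩ : Fin n) = 0) : μH[(n:ℝ)-1] K < ⊤ := by
  haveI : NeZero n := ⟨by omega⟩
  set i0 : Fin n := ⟨0, hn⟩
  set l : EuclideanSpace ℝ (Fin n) →ₗ[ℝ] ℝ := (EuclideanSpace.proj i0).toLinearMap with hl
  set H := LinearMap.ker l with hH
  have hlsurj : Function.Surjective l := by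
    intro c
    exact ⟨EuclideanSpace.single i0 c, by simp [hl]⟩
  have hfr : finrank ℝ H = n - 1 := by
    have h1 := LinearMap.finrank_range_add_finrank_ker l
    rw [LinearMap.range_eq_top.mpr hlsurj] at h1
    rw [finrank_top ℝ ℝ] at h1
    rw [finrank_self, finrank_euclideanSpace_fin, ← hH] at h1
    omega
  set j : EuclideanSpace ℝ (Fin (finrank ℝ H)) →ₗᵢ[ℝ] EuclideanSpace ℝ (Fin n) :=
    H.subtypeₗᵢ.comp (stdOrthonormalBasis ℝ H).repr.symm.toLinearIsometry with hj
  have hrange : Set.range j = (H : Set (EuclideanSpace ℝ (Fin n))) := by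
    rw [hj]
    simp only [LinearIsometry.coe_comp, Set.range_comp,
      LinearIsometryEquiv.coe_toLinearIsometry,
      Set.range_eq_univ.mpr (stdOrthonormalBasis ℝ H).repr.symm.surjective,
      Set.image_univ]
    simp
  set s := j ⁻¹' K with hs
  have himg : j '' s = K := by
    rw [hs, Set.image_preimage_eq_inter_range, hrange, Set.inter_eq_left]
    intro x hx
    exact (LinearMap.mem_ker).mpr (hK0 x hx)
  have hscomp : IsCompact s := by
    refine Metric.isCompact_of_isClosed_isBounded (hK.isClosed.preimage j.continuous) ?_
    obtain ⟨M, hM⟩ := hK.isBounded.subset_closedBall 0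
    rw [Metric.isBounded_iff_subset_closedBall 0]
    refine ⟨M, fun y hy => ?_⟩
    have := hM hy
    simp only [Metric.mem_closedBall, dist_zero_right] at this ⊢
    rwa [← j.norm_map y]
  have hd : (0:ℝ) ≤ (n:ℝ) - 1 := by
    have : (1:ℝ) ≤ n := by exact_mod_cast hn
    linarith
  rw [← himg, j.isometry.hausdorffMeasure_image (Or.inl hd)]
  have hidx : (n:ℝ) - 1 = ((finrank ℝ (EuclideanSpace ℝ (Fin (finrank ℝ H)))) : ℝ) := by
    rw [finrank_euclideanSpace_fin, hfr]
    have : (1:ℝ) ≤ n := by exact_mod_cast hn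
    push_cast [Nat.cast_sub hn]
    ring
  rw [hidx]
  exact hscomp.measure_lt_top


lemma aux2 (n : ℕ) (hn : 1 ≤ n)
    (aux1 : ∀ (K : Set (EuclideanSpace ℝ (Fin n))), IsCompact K →
      (∀ x ∈ K, x (⟨0, hn⟩ : Fin n) = 0) → μH[(n:ℝ)-1] K < ⊤)
    (i : Fin n) (e : ℝ) (K : Set (EuclideanSpace ℝ (Fin n)))
    (hK : IsCompact K) (hKi : ∀ x ∈ K, x i = e) : μH[(n:ℝ)-1] K < ⊤ := by
  set i0 : Fin n := ⟨0, hn⟩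
  set S := LinearIsometryEquiv.piLpCongrLeft 2 ℝ ℝ (Equiv.swap i0 i) with hS
  set v : EuclideanSpace ℝ (Fin n) := EuclideanSpace.single i0 e with hv
  set T : EuclideanSpace ℝ (Fin n) → EuclideanSpace ℝ (Fin n) := fun x => S x - v with hT
  have hTiso : Isometry T := by
    have h1 : Isometry (fun y : EuclideanSpace ℝ (Fin n) => y - v) :=
      Isometry.of_dist_eq fun a b => by rw [dist_sub_right]
    exact h1.comp S.isometry
  have himg : ∀ x ∈ K, (T x) i0 = 0 := by
    intro x hx
    have h1 : (S x) i0 = x i := by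
      rw [hS]
      show x ((Equiv.swap i0 i).symm i0) = x i
      rw [Equiv.symm_swap, Equiv.swap_apply_left]
    have h2 : v i0 = e := by simp [hv, EuclideanSpace.single_apply]
    simp only [hT, PiLp.sub_apply, h1, h2, hKi x hx, sub_self]
  have := aux1 (T '' K) (hK.image hTiso.continuous) (by rintro _ ⟨x, hx, rfl⟩; exact himg x hx)
  rwa [hTiso.hausdorffMeasure_image (Or.inl (by
    have : (1:ℝ) ≤ n := by exact_mod_cast hn
    linarith))] at this


lemma auxP_lip (n : ℕ) :
    LipschitzOnWith 2 (fun x : EuclideanSpace ℝ (Fin n) => ‖x‖⁻¹ • x)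
      {x : EuclideanSpace ℝ (Fin n) | 1 ≤ ‖x‖} := by
  refine LipschitzOnWith.of_dist_le_mul fun x hx y hy => ?_
  simp only [Set.mem_setOf_eq] at hx hy
  have hx0 : (0:ℝ) < ‖x‖ := lt_of_lt_of_le one_pos hx
  have hy0 : (0:ℝ) < ‖y‖ := lt_of_lt_of_le one_pos hy
  rw [dist_eq_norm, dist_eq_norm]
  have hdecomp : ‖x‖⁻¹ • x - ‖y‖⁻¹ • y
      = ‖x‖⁻¹ • (x - y) + (‖x‖⁻¹ - ‖y‖⁻¹) • y := by
    rw [smul_sub, sub_smul]; abel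
  rw [hdecomp]
  have h1 : ‖‖x‖⁻¹ • (x - y)‖ ≤ ‖x - y‖ := by
    rw [norm_smul, norm_inv, norm_norm]
    calc ‖x‖⁻¹ * ‖x - y‖ ≤ 1 * ‖x - y‖ := by
          apply mul_le_mul_of_nonneg_right _ (norm_nonneg _)
          rw [inv_le_one_iff₀]; right; exact hx
      _ = ‖x - y‖ := one_mul _
  have h2 : ‖(‖x‖⁻¹ - ‖y‖⁻¹) • y‖ ≤ ‖x - y‖ := by
    rw [norm_smul, Real.norm_eq_abs]
    have heq : ‖x‖⁻¹ - ‖y‖⁻¹ = (‖y‖ - ‖x‖) / (‖x‖ * ‖y‖) := by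
      field_simp
    rw [heq, abs_div, abs_mul, abs_of_pos hx0, abs_of_pos hy0]
    have h3 : |‖y‖ - ‖x‖| ≤ ‖x - y‖ := by
      rw [← norm_neg (x - y), neg_sub]
      exact abs_norm_sub_norm_le y x
    calc |‖y‖ - ‖x‖| / (‖x‖ * ‖y‖) * ‖y‖ = |‖y‖ - ‖x‖| / ‖x‖ := by
          field_simp
      _ ≤ ‖x - y‖ / 1 := div_le_div₀ (norm_nonneg _) h3 one_pos hx
      _ = ‖x - y‖ := div_one _
  calc ‖‖x‖⁻¹ • (x - y) + (‖x‖⁻¹ - ‖y‖⁻¹) • y‖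
      ≤ ‖‖x‖⁻¹ • (x - y)‖ + ‖(‖x‖⁻¹ - ‖y‖⁻¹) • y‖ := norm_add_le _ _
    _ ≤ ‖x - y‖ + ‖x - y‖ := add_le_add h1 h2
    _ = 2 * ‖x - y‖ := by ring


lemma aux_sphere_fin (n : ℕ) (hn : 1 ≤ n) :
    μH[(n:ℝ)-1] (Metric.sphere (0 : EuclideanSpace ℝ (Fin n)) 1) < ⊤ := by
  classical
  set E := EuclideanSpace ℝ (Fin n)
  set P : E → E := fun x => ‖x‖⁻¹ • x with hP
  set F : Fin n × Bool → Set E := fun p =>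
    {x : E | x p.1 = (if p.2 then (1:ℝ) else -1)} ∩ Metric.closedBall 0 (n+1) with hF
  set B : Set E := ⋃ p : Fin n × Bool, F p with hB
  have hFcompact : ∀ p, IsCompact (F p) := by
    intro p
    apply (isCompact_closedBall _ _).inter_left
    exact isClosed_eq (EuclideanSpace.proj p.1).continuous continuous_const
  have hBsub : B ⊆ {x : E | 1 ≤ ‖x‖} := by
    rintro x hx
    simp only [hB, Set.mem_iUnion] at hx
    obtain ⟨p, hp1, -⟩ := hx
    have h1 : |x p.1| = 1 := by
      rw [hp1]; cases p.2 <;> simp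
    have h2 : |x p.1| ≤ ‖x‖ := by
      have := EuclideanSpace.norm_eq x
      have hsq : (x p.1)^2 ≤ ‖x‖^2 := by
        rw [EuclideanSpace.norm_eq, Real.sq_sqrt (by positivity)]
        have : (x p.1)^2 = ‖x p.1‖^2 := by rw [Real.norm_eq_abs, sq_abs]
        rw [this]
        exact Finset.single_le_sum (f := fun j => ‖x j‖^2) (fun j _ => by positivity)
          (Finset.mem_univ p.1)
      nlinarith [abs_nonneg (x p.1), norm_nonneg x, sq_abs (x p.1)]
    calc (1:ℝ) = |x p.1| := h1.symm
      _ ≤ ‖x‖ := h2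
  have hsub : Metric.sphere (0:E) 1 ⊆ P '' B := by
    intro x hx
    have hxnorm : ‖x‖ = 1 := by simpa using hx
    obtain ⟨i, -, hi⟩ := Finset.exists_max_image Finset.univ (fun j => |x j|)
      ⟨(⟨0, hn⟩ : Fin n), Finset.mem_univ _⟩
    set t := |x i| with htdef
    have hsum : ∑ j, (x j)^2 = 1 := by
      have := EuclideanSpace.norm_eq x
      have h2 : ‖x‖^2 = ∑ j, ‖x j‖^2 := by
        rw [EuclideanSpace.norm_eq, Real.sq_sqrt (by positivity)]
      rw [hxnorm] at h2
      simp only [Real.norm_eq_abs, sq_abs] at h2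
      linarith
    have hbound : (1:ℝ) ≤ n * t^2 := by
      have h3 : ∑ j, (x j)^2 ≤ ∑ _j : Fin n, t^2 := by
        apply Finset.sum_le_sum
        intro j _
        have := hi j (Finset.mem_univ j)
        calc (x j)^2 = |x j|^2 := (sq_abs _).symm
          _ ≤ t^2 := by nlinarith [abs_nonneg (x j)]
      rw [Finset.sum_const, Finset.card_univ, Fintype.card_fin, nsmul_eq_mul] at h3
      linarith
    have ht0 : 0 < t := by
      rcases lt_or_eq_of_le (abs_nonneg (x i)) with h | h
      · exact h
      · exfalso; rw [htdef, ← h] at hbound; norm_num at hbound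
    have ht1 : t ≤ 1 := by
      have h4 : t^2 ≤ ∑ j, (x j)^2 := by
        have : t^2 = (x i)^2 := by rw [htdef, sq_abs]
        rw [this]
        exact Finset.single_le_sum (f := fun j => (x j)^2) (fun j _ => by positivity)
          (Finset.mem_univ i)
      nlinarith
    set y : E := t⁻¹ • x with hy
    have hyn : ‖y‖ = t⁻¹ := by
      rw [hy, norm_smul, norm_inv, Real.norm_eq_abs, abs_abs, hxnorm, mul_one]
    have htinv : t⁻¹ ≤ n + 1 := by
      have h5 : t⁻¹ ≤ n * t := by
        rw [inv_le_iff_one_le_mul₀ ht0]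
        nlinarith
      have h6 : (n:ℝ) * t ≤ n := by nlinarith [ht1, (by positivity : (0:ℝ) ≤ (n:ℝ))]
      linarith
    have hyabs : |y i| = 1 := by
      rw [hy]
      show |t⁻¹ * x i| = 1
      rw [abs_mul, abs_inv, abs_abs, ← htdef, inv_mul_cancel₀ (ne_of_gt ht0)]
    have hycases : y i = 1 ∨ y i = -1 := by
      rcases abs_eq (by norm_num : (0:ℝ) ≤ 1) |>.mp hyabs with h | h
      · left; exact h
      · right; exact h
    refine ⟨y, ?_, ?_⟩
    · simp only [hB, Set.mem_iUnion]
      rcases hycases with h | h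
      · exact ⟨(i, true), h, by
          simp only [Metric.mem_closedBall, dist_zero_right, hyn]; exact htinv⟩
      · exact ⟨(i, false), by simpa using h, by
          simp only [Metric.mem_closedBall, dist_zero_right, hyn]; exact htinv⟩
    · rw [hP]
      show ‖y‖⁻¹ • y = x
      rw [hyn, inv_inv, hy, smul_smul, mul_inv_cancel₀ (ne_of_gt ht0), one_smul]
  have hFfin : ∀ p : Fin n × Bool, μH[(n:ℝ)-1] (F p) < ⊤ := by
    intro p
    exact aux2 n hn (fun K a b => aux1 n hn K a b) p.1 _ (F p) (hFcompact p) (fun x hx => hx.1)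
  have hBfin : μH[(n:ℝ)-1] B < ⊤ := by
    calc μH[(n:ℝ)-1] B ≤ ∑' p : Fin n × Bool, μH[(n:ℝ)-1] (F p) := measure_iUnion_le F
      _ < ⊤ := by
          rw [tsum_fintype]
          exact ENNReal.sum_lt_top.mpr fun p _ => hFfin p
  have hd : (0:ℝ) ≤ (n:ℝ) - 1 := by
    have : (1:ℝ) ≤ n := by exact_mod_cast hn
    linarith
  calc μH[(n:ℝ)-1] (Metric.sphere (0:E) 1) ≤ μH[(n:ℝ)-1] (P '' B) := measure_mono hsub
    _ ≤ ((2:ℝ≥0) : ℝ≥0∞) ^ ((n:ℝ)-1) * μH[(n:ℝ)-1] B :=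
        ((auxP_lip n).mono hBsub).hausdorffMeasure_image_le hd
    _ < ⊤ := ENNReal.mul_lt_top
        (ENNReal.rpow_lt_top_of_nonneg hd ENNReal.coe_ne_top) hBfin

/-- Lemma 2 of the paper, in asymptotic coordinates. Let
`f : ℝⁿ → ℝ` be `C¹` on `E_R = {‖x‖ ≥ R}` with `f ≥ ε > 0`,
`|f - 1| = O(‖x‖^(-τ))` and `‖∇f‖ = O(‖x‖^(-τ-1))`, where `2τ > n - 2`. Then
`∫_{S_r} (df/f)(ν) dσ - ∫_{S_r} df(ν) dσ → 0` as `r → ∞`; in particular one of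
the two families of sphere integrals converges iff the other does, and to the
same limit. -/
theorem lemma2_lee_form_boundary_term (n : ℕ) (hn : 2 ≤ n) (R C ε τ : ℝ)
    (hR : 0 < R) (hC : 0 ≤ C) (hε : 0 < ε) (hτ : 0 < τ)
    (hτn : (n : ℝ) - 2 < 2 * τ)
    (f : EuclideanSpace ℝ (Fin n) → ℝ)
    (hdiff : ∀ x : EuclideanSpace ℝ (Fin n), R ≤ ‖x‖ → DifferentiableAt ℝ f x)
    (hC1 : ContinuousOn (fun x => fderiv ℝ f x) {x : EuclideanSpace ℝ (Fin n) | R ≤ ‖x‖})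
    (hf_low : ∀ x : EuclideanSpace ℝ (Fin n), R ≤ ‖x‖ → ε ≤ f x)
    (hf_one : ∀ x : EuclideanSpace ℝ (Fin n), R ≤ ‖x‖ → |f x - 1| ≤ C * ‖x‖ ^ (-τ))
    (hf_grad : ∀ x : EuclideanSpace ℝ (Fin n), R ≤ ‖x‖ →
      ‖gradient f x‖ ≤ C * ‖x‖ ^ (-τ - 1)) :
    Tendsto
      (fun r : ℝ =>
        (∫ x in Metric.sphere (0 : EuclideanSpace ℝ (Fin n)) r,
            (1 / f x) * (inner ℝ (gradient f x) (‖x‖⁻¹ • x) : ℝ) ∂(μH[(n : ℝ) - 1])) -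
        ∫ x in Metric.sphere (0 : EuclideanSpace ℝ (Fin n)) r,
            (inner ℝ (gradient f x) (‖x‖⁻¹ • x) : ℝ) ∂(μH[(n : ℝ) - 1]))
      atTop (nhds 0) ∧
    ∀ L : ℝ,
      Tendsto
        (fun r : ℝ =>
          ∫ x in Metric.sphere (0 : EuclideanSpace ℝ (Fin n)) r,
            (1 / f x) * (inner ℝ (gradient f x) (‖x‖⁻¹ • x) : ℝ) ∂(μH[(n : ℝ) - 1]))
        atTop (nhds L) ↔
      Tendsto
        (fun r : ℝ =>
          ∫ x in Metric.sphere (0 : EuclideanSpace ℝ (Fin n)) r,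
            (inner ℝ (gradient f x) (‖x‖⁻¹ • x) : ℝ) ∂(μH[(n : ℝ) - 1]))
        atTop (nhds L) := by
  classical
  set d : ℝ := (n:ℝ) - 1 with hd_def
  have hd0 : (0:ℝ) ≤ d := by
    have : (2:ℝ) ≤ n := by exact_mod_cast hn
    simp only [hd_def]; linarith
  set μ : Measure (EuclideanSpace ℝ (Fin n)) := μH[d] with hμ
  set c : ℝ≥0∞ := μ (Metric.sphere (0:EuclideanSpace ℝ (Fin n)) 1) with hc_def
  have hc : c < ⊤ := aux_sphere_fin n (by omega)
  set g : EuclideanSpace ℝ (Fin n) → ℝ := fun x => (inner ℝ (gradient f x) (‖x‖⁻¹ • x) : ℝ) with hg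
  set I1 : EuclideanSpace ℝ (Fin n) → ℝ := fun x => (1 / f x) * g x with hI1
  set A : ℝ → ℝ := fun r => ∫ x in Metric.sphere (0:EuclideanSpace ℝ (Fin n)) r, I1 x ∂μ with hA
  set B : ℝ → ℝ := fun r => ∫ x in Metric.sphere (0:EuclideanSpace ℝ (Fin n)) r, g x ∂μ with hB
  -- sphere measure for r > 0
  have hsphere_meas : ∀ r : ℝ, 0 < r →
      μ (Metric.sphere (0:EuclideanSpace ℝ (Fin n)) r) = (‖r‖₊ : ℝ≥0∞) ^ d * c := by
    intro r hr
    have h1 : r • Metric.sphere (0:EuclideanSpace ℝ (Fin n)) 1 = Metric.sphere (0:EuclideanSpace ℝ (Fin n)) r := by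
      rw [smul_sphere' (ne_of_gt hr) (0:EuclideanSpace ℝ (Fin n)) 1]
      simp [Real.norm_eq_abs, abs_of_pos hr]
    rw [← h1, hμ, Measure.hausdorffMeasure_smul₀ hd0 (ne_of_gt hr)]
    rw [ENNReal.smul_def, smul_eq_mul, ENNReal.coe_rpow_of_nonneg _ hd0]
  have hsphere_fin : ∀ r : ℝ, 0 < r → μ (Metric.sphere (0:EuclideanSpace ℝ (Fin n)) r) < ⊤ := by
    intro r hr
    rw [hsphere_meas r hr]
    exact ENNReal.mul_lt_top (ENNReal.rpow_lt_top_of_nonneg hd0 ENNReal.coe_ne_top) hc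
  have hsphere_toReal : ∀ r : ℝ, 0 < r →
      (μ (Metric.sphere (0:EuclideanSpace ℝ (Fin n)) r)).toReal = r ^ d * c.toReal := by
    intro r hr
    rw [hsphere_meas r hr, ENNReal.toReal_mul]
    congr 1
    rw [← ENNReal.toReal_rpow]
    simp [Real.norm_eq_abs, abs_of_pos hr]
  -- continuity facts
  set S : Set (EuclideanSpace ℝ (Fin n)) := {x : EuclideanSpace ℝ (Fin n) | R ≤ ‖x‖} with hS
  have hfcont : ContinuousOn f S := fun x hx => (hdiff x hx).continuousAt.continuousWithinAt
  have hgradcont : ContinuousOn (gradient f) S := by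
    have : gradient f = fun x => (InnerProductSpace.toDual ℝ (EuclideanSpace ℝ (Fin n))).symm (fderiv ℝ f x) := rfl
    rw [this]
    exact (InnerProductSpace.toDual ℝ (EuclideanSpace ℝ (Fin n))).symm.continuous.comp_continuousOn hC1
  have hgcont : ContinuousOn g (S ∩ {x : EuclideanSpace ℝ (Fin n) | x ≠ 0}) := by
    apply ContinuousOn.inner (hgradcont.mono Set.inter_subset_left)
    refine ContinuousOn.smul (f := fun t => ‖t‖⁻¹) (g := fun t => t) ?_ ?_
    · exact ContinuousOn.inv₀ continuous_norm.continuousOn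
        (fun x hx => norm_ne_zero_iff.mpr hx.2)
    · exact continuousOn_id
  have hI1cont : ContinuousOn I1 (S ∩ {x : EuclideanSpace ℝ (Fin n) | x ≠ 0}) := by
    apply ContinuousOn.mul _ hgcont
    apply ContinuousOn.div continuousOn_const (hfcont.mono Set.inter_subset_left)
    intro x hx
    exact ne_of_gt (lt_of_lt_of_le hε (hf_low x hx.1))
  -- sphere inside domain
  have hsphere_sub : ∀ r : ℝ, max R 1 ≤ r →
      Metric.sphere (0:EuclideanSpace ℝ (Fin n)) r ⊆ S ∩ {x : EuclideanSpace ℝ (Fin n) | x ≠ 0} := by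
    intro r hr x hx
    have hxn : ‖x‖ = r := by simpa using hx
    constructor
    · rw [hS, Set.mem_setOf_eq, hxn]; exact le_trans (le_max_left _ _) hr
    · rw [Set.mem_setOf_eq, ← norm_ne_zero_iff, hxn]
      have : (1:ℝ) ≤ r := le_trans (le_max_right _ _) hr
      linarith
  -- integrability
  have hmsble : ∀ r : ℝ, MeasurableSet (Metric.sphere (0:EuclideanSpace ℝ (Fin n)) r) :=
    fun r => (Metric.isClosed_sphere).measurableSet
  have hrpos : ∀ r : ℝ, max R 1 ≤ r → 0 < r := fun r hr =>
    lt_of_lt_of_le one_pos (le_trans (le_max_right _ _) hr)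
  have hint : ∀ r : ℝ, max R 1 ≤ r → ∀ (h : EuclideanSpace ℝ (Fin n) → ℝ),
      ContinuousOn h (S ∩ {x : EuclideanSpace ℝ (Fin n) | x ≠ 0}) → (∃ M, ∀ x ∈ Metric.sphere (0:EuclideanSpace ℝ (Fin n)) r, ‖h x‖ ≤ M) →
      IntegrableOn h (Metric.sphere (0:EuclideanSpace ℝ (Fin n)) r) μ := by
    intro r hr h hcont hex
    obtain ⟨M, hM⟩ := hex
    exact ⟨(hcont.mono (hsphere_sub r hr)).aestronglyMeasurable (hmsble r),
      HasFiniteIntegral.restrict_of_bounded (C := M) (hsphere_fin r (hrpos r hr))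
        ((ae_restrict_iff' (hmsble r)).mpr (ae_of_all _ hM))⟩
  -- pointwise bounds on the sphere
  have hgbd : ∀ r : ℝ, max R 1 ≤ r → ∀ x ∈ Metric.sphere (0:EuclideanSpace ℝ (Fin n)) r,
      |g x| ≤ C * r ^ (-τ - 1) := by
    intro r hr x hx
    have hxn : ‖x‖ = r := by simpa using hx
    have hxR : R ≤ ‖x‖ := by rw [hxn]; exact le_trans (le_max_left _ _) hr
    have hx0 : x ≠ 0 := by
      rw [← norm_ne_zero_iff, hxn]; exact ne_of_gt (hrpos r hr)
    have hunit : ‖(‖x‖⁻¹ • x : EuclideanSpace ℝ (Fin n))‖ = 1 := by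
      rw [norm_smul, norm_inv, norm_norm, inv_mul_cancel₀ (norm_ne_zero_iff.mpr hx0)]
    calc |g x| ≤ ‖gradient f x‖ * ‖(‖x‖⁻¹ • x : EuclideanSpace ℝ (Fin n))‖ := abs_real_inner_le_norm _ _
      _ = ‖gradient f x‖ := by rw [hunit, mul_one]
      _ ≤ C * ‖x‖ ^ (-τ - 1) := hf_grad x hxR
      _ = C * r ^ (-τ - 1) := by rw [hxn]
  have hdiffbd : ∀ r : ℝ, max R 1 ≤ r → ∀ x ∈ Metric.sphere (0:EuclideanSpace ℝ (Fin n)) r,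
      ‖I1 x - g x‖ ≤ (C * r ^ (-τ) / ε) * (C * r ^ (-τ - 1)) := by
    intro r hr x hx
    have hr0 : 0 < r := hrpos r hr
    have hxn : ‖x‖ = r := by simpa using hx
    have hxR : R ≤ ‖x‖ := by rw [hxn]; exact le_trans (le_max_left _ _) hr
    have hfx : ε ≤ f x := hf_low x hxR
    have hfx0 : 0 < f x := lt_of_lt_of_le hε hfx
    have h1 : I1 x - g x = (1 / f x - 1) * g x := by rw [hI1]; ring
    rw [h1, Real.norm_eq_abs, abs_mul]
    have h2 : |1 / f x - 1| ≤ C * r ^ (-τ) / ε := by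
      have h3 : 1 / f x - 1 = (1 - f x) / f x := by field_simp
      rw [h3, abs_div, abs_of_pos hfx0]
      have h4 : |1 - f x| ≤ C * r ^ (-τ) := by
        rw [abs_sub_comm]
        calc |f x - 1| ≤ C * ‖x‖ ^ (-τ) := hf_one x hxR
          _ = C * r ^ (-τ) := by rw [hxn]
      exact div_le_div₀ (mul_nonneg hC (Real.rpow_nonneg hr0.le _)) h4 hε hfx
    have h5 := hgbd r hr x hx
    have hnn : (0:ℝ) ≤ |g x| := abs_nonneg _
    exact mul_le_mul h2 h5 hnn
      (div_nonneg (mul_nonneg hC (Real.rpow_nonneg hr0.le _)) hε.le)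
  -- the main estimate
  have hest : ∀ r : ℝ, max R 1 ≤ r →
      ‖A r - B r‖ ≤ (C^2 / ε * c.toReal) * r ^ ((n:ℝ) - 2 - 2*τ) := by
    intro r hr
    have hr0 : 0 < r := hrpos r hr
    haveI : IsFiniteMeasure (μ.restrict (Metric.sphere (0:EuclideanSpace ℝ (Fin n)) r)) := by
      constructor
      rw [Measure.restrict_apply_univ]
      exact hsphere_fin r hr0
    have hintg : IntegrableOn g (Metric.sphere (0:EuclideanSpace ℝ (Fin n)) r) μ :=
      hint r hr g hgcont ⟨C * r ^ (-τ - 1), fun x hx => by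
        rw [Real.norm_eq_abs]; exact hgbd r hr x hx⟩
    have hintI1 : IntegrableOn I1 (Metric.sphere (0:EuclideanSpace ℝ (Fin n)) r) μ := by
      apply hint r hr I1 hI1cont
      refine ⟨(1/ε) * (C * r ^ (-τ - 1)), fun x hx => ?_⟩
      have hxn : ‖x‖ = r := by simpa using hx
      have hxR : R ≤ ‖x‖ := by rw [hxn]; exact le_trans (le_max_left _ _) hr
      have hfx : ε ≤ f x := hf_low x hxR
      have hfx0 : 0 < f x := lt_of_lt_of_le hε hfx
      rw [hI1, Real.norm_eq_abs, abs_mul, abs_of_pos (one_div_pos.mpr hfx0)]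
      exact mul_le_mul (one_div_le_one_div_of_le hε hfx) (hgbd r hr x hx) (abs_nonneg _)
        (le_of_lt (one_div_pos.mpr hε))
    have heq : A r - B r = ∫ x in Metric.sphere (0:EuclideanSpace ℝ (Fin n)) r, (I1 x - g x) ∂μ :=
      (integral_sub hintI1 hintg).symm
    rw [heq]
    have hb := norm_integral_le_of_norm_le_const (μ := μ.restrict (Metric.sphere (0:EuclideanSpace ℝ (Fin n)) r))
      (C := (C * r ^ (-τ) / ε) * (C * r ^ (-τ - 1)))
      ((ae_restrict_iff' (hmsble r)).mpr (ae_of_all _ (hdiffbd r hr)))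
    rw [measureReal_restrict_apply_univ] at hb
    calc ‖∫ x in Metric.sphere (0:EuclideanSpace ℝ (Fin n)) r, (I1 x - g x) ∂μ‖
        ≤ (C * r ^ (-τ) / ε) * (C * r ^ (-τ - 1)) * (μ (Metric.sphere (0:EuclideanSpace ℝ (Fin n)) r)).toReal := hb
      _ = (C^2 / ε * c.toReal) * r ^ ((n:ℝ) - 2 - 2*τ) := by
          rw [hsphere_toReal r hr0, hd_def,
            show (n:ℝ) - 2 - 2*τ = (-τ) + ((-τ-1) + ((n:ℝ)-1)) by ring,
            Real.rpow_add hr0, Real.rpow_add hr0]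
          ring
  -- tendsto zero
  have htendsto : Tendsto (fun r => A r - B r) atTop (nhds 0) := by
    apply squeeze_zero_norm' (a := fun r => (C^2 / ε * c.toReal) * r ^ ((n:ℝ) - 2 - 2*τ))
    · filter_upwards [eventually_ge_atTop (max R 1)] with r hr
      exact hest r hr
    · have hexp : (n:ℝ) - 2 - 2*τ = -(2*τ + 2 - n) := by ring
      rw [hexp]
      have h0 : (0:ℝ) < 2*τ + 2 - n := by linarith
      have := (tendsto_rpow_neg_atTop h0).const_mul (C^2 / ε * c.toReal)
      simpa using this
  refine ⟨htendsto, fun L => ?_⟩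
  constructor
  · intro hA'
    have := hA'.sub htendsto
    simpa using this
  · intro hB'
    have := hB'.add htendsto
    have h2 : (fun r => B r + (A r - B r)) = A := by funext r; ring
    rw [h2] at this
    simpa using this
end

section
/- Let n ≥ 3, R > 0, C ≥ 0 and τ > (n−2)/2. Let a : ℝⁿ → Matrix (Fin n) (Fin n) ℝ be continuously differentiable on E_R with |a_{ij}(x)| ≤ C‖x‖^(−τ) and |∂_k a_{ij}(x)| ≤ C‖x‖^(−τ−1) for all indices i, j, k and all x ∈ E_R, and set g_{ij} = δ_{ij} + a_{ij}. Let f : ℝⁿ → ℝ be continuously differentiable on E_R with |f(x) − 1| ≤ C‖x‖^(−τ) and ‖∇f(x)‖ ≤ C‖x‖^(−τ−1) for all x ∈ E_R. Then 𝔪_r(f·g) − 𝔪_r(g) − (1−n)·∫_{S_r} ⟨∇f(x), ν(x)⟩ dσ(x) tends to 0 as r → ∞, where (f·g)_{ij} = f·g_{ij}. -/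
open MeasureTheory Filter Metric

/-- The mass surface integral at radius `r` of a matrix-valued field `G` on `ℝⁿ`:
`𝔪_r(G) = ∫_{S_r} Σ_{i,j} (∂_i G_{ij} - ∂_j G_{ii}) ν_j dσ`, where `σ` is the
`(n-1)`-dimensional Hausdorff measure and `ν(x) = x/‖x‖`. -/
noncomputable def massSurfaceIntegral (n : ℕ)
    (G : EuclideanSpace ℝ (Fin n) → Matrix (Fin n) (Fin n) ℝ) (r : ℝ) : ℝ :=
  ∫ x in Metric.sphere (0 : EuclideanSpace ℝ (Fin n)) r,
    ∑ i : Fin n, ∑ j : Fin n,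
      (fderiv ℝ (fun y => G y i j) x (EuclideanSpace.single i 1) -
        fderiv ℝ (fun y => G y i i) x (EuclideanSpace.single j 1)) * (x j / ‖x‖)
    ∂(μH[(n : ℝ) - 1])

open Set
open scoped Pointwise


lemma sqrt_lip {m a b : ℝ} (hm : 0 < m) (ha : m ≤ a) (hb : m ≤ b) :
    |Real.sqrt a - Real.sqrt b| ≤ |a - b| / (2 * Real.sqrt m) := by
  have hsm : 0 < Real.sqrt m := Real.sqrt_pos.mpr hm
  rw [le_div_iff₀ (by positivity)]
  have h1 : Real.sqrt a ^ 2 = a := Real.sq_sqrt (hm.le.trans ha)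
  have h2 : Real.sqrt b ^ 2 = b := Real.sq_sqrt (hm.le.trans hb)
  have key : |Real.sqrt a - Real.sqrt b| * (Real.sqrt a + Real.sqrt b) = |a - b| := by
    rw [← abs_of_nonneg (show (0:ℝ) ≤ Real.sqrt a + Real.sqrt b by positivity), ← abs_mul]
    congr 1
    nlinarith [h1, h2]
  have hma : Real.sqrt m ≤ Real.sqrt a := Real.sqrt_le_sqrt ha
  have hmb : Real.sqrt m ≤ Real.sqrt b := Real.sqrt_le_sqrt hb
  calc |Real.sqrt a - Real.sqrt b| * (2 * Real.sqrt m)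
      ≤ |Real.sqrt a - Real.sqrt b| * (Real.sqrt a + Real.sqrt b) := by
        gcongr; linarith
    _ = |a - b| := key

set_option maxHeartbeats 1000000 in
lemma unit_sphere_hausdorff_lt_top (n : ℕ) (hn : 1 ≤ n) :
    μH[(n:ℝ) - 1] (Metric.sphere (0 : EuclideanSpace ℝ (Fin n)) 1) < ⊤ := by
  haveI : Nonempty (Fin n) := ⟨⟨0, by omega⟩⟩
  set d : ℝ := (n:ℝ) - 1 with hd_def
  have hn1 : (1:ℝ) ≤ n := by exact_mod_cast hn
  have hd : 0 ≤ d := by simp only [hd_def]; linarith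
  have hn0 : (0:ℝ) < n := by linarith
  have main : ∀ k : Fin n, ∃ u : Set (EuclideanSpace ℝ (Fin n)),
      μH[d] u < ⊤ ∧ ∀ x ∈ Metric.sphere (0 : EuclideanSpace ℝ (Fin n)) 1,
        (n:ℝ)⁻¹ ≤ (x k)^2 → x ∈ u := by
    intro k
    set ι := {i : Fin n // i ≠ k} with hι
    set G := EuclideanSpace ℝ ι with hG
    set c : ℝ := 1 - (n:ℝ)⁻¹ with hc_def
    have hc0 : 0 ≤ c := by
      have : (n:ℝ)⁻¹ ≤ 1 := by
        rw [inv_le_one_iff₀]; right; exact hn1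
      simp only [hc_def]; linarith
    set h : G → ℝ := fun y => Real.sqrt (1 - min (‖y‖^2) c) with hh_def
    set φ : ℝ → G → EuclideanSpace ℝ (Fin n) := fun ε y =>
      WithLp.toLp 2 (fun i => if hik : i = k then ε * h y else y ⟨i, hik⟩) with hφ_def
    set D : Set G := Metric.closedBall 0 1 with hD_def
    -- h is Lipschitz on D
    have hmin_pos : ∀ y : G, (n:ℝ)⁻¹ ≤ 1 - min (‖y‖^2) c := by
      intro y
      have : min (‖y‖^2) c ≤ c := min_le_right _ _
      simp only [hc_def] at this ⊢; linarith
    have hlip : ∀ y z : G, y ∈ D → z ∈ D → |h y - h z| ≤ Real.sqrt n * ‖y - z‖ := by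
      intro y z hy hz
      have hy1 : ‖y‖ ≤ 1 := by simpa [hD_def] using mem_closedBall_zero_iff.mp hy
      have hz1 : ‖z‖ ≤ 1 := by simpa [hD_def] using mem_closedBall_zero_iff.mp hz
      have step1 : |h y - h z| ≤ |(1 - min (‖y‖^2) c) - (1 - min (‖z‖^2) c)| / (2 * Real.sqrt ((n:ℝ)⁻¹)) :=
        sqrt_lip (by positivity) (hmin_pos y) (hmin_pos z)
      have step2 : |(1 - min (‖y‖^2) c) - (1 - min (‖z‖^2) c)| ≤ |‖y‖^2 - ‖z‖^2| := by
        have h3 := abs_min_sub_min_le_max (‖z‖^2) c (‖y‖^2) c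
        simp only [sub_self, abs_zero] at h3
        have h2 : max |‖z‖^2 - ‖y‖^2| 0 = |‖z‖^2 - ‖y‖^2| := max_eq_left (abs_nonneg _)
        rw [h2] at h3
        calc |(1 - min (‖y‖^2) c) - (1 - min (‖z‖^2) c)| = |min (‖z‖^2) c - min (‖y‖^2) c| := by
              rw [show (1 - min (‖y‖^2) c) - (1 - min (‖z‖^2) c) = min (‖z‖^2) c - min (‖y‖^2) c by ring]
          _ ≤ |‖z‖^2 - ‖y‖^2| := h3
          _ = |‖y‖^2 - ‖z‖^2| := abs_sub_comm _ _
      have step3 : |‖y‖^2 - ‖z‖^2| ≤ 2 * ‖y - z‖ := by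
        have e1 : |‖y‖^2 - ‖z‖^2| = |‖y‖ - ‖z‖| * (‖y‖ + ‖z‖) := by
          rw [← abs_of_nonneg (show (0:ℝ) ≤ ‖y‖ + ‖z‖ by positivity), ← abs_mul]
          congr 1; ring
        rw [e1]
        calc |‖y‖ - ‖z‖| * (‖y‖ + ‖z‖) ≤ ‖y - z‖ * 2 :=
              mul_le_mul (abs_norm_sub_norm_le y z) (by linarith) (by positivity) (norm_nonneg _)
          _ = 2 * ‖y - z‖ := by ring
      have hsn : Real.sqrt ((n:ℝ)⁻¹) = (Real.sqrt n)⁻¹ := Real.sqrt_inv n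
      have hsnpos : 0 < Real.sqrt n := Real.sqrt_pos.mpr hn0
      calc |h y - h z| ≤ |‖y‖^2 - ‖z‖^2| / (2 * Real.sqrt ((n:ℝ)⁻¹)) := by
            apply le_trans step1; gcongr
        _ ≤ (2 * ‖y - z‖) / (2 * (Real.sqrt n)⁻¹) := by rw [hsn]; gcongr
        _ = Real.sqrt n * ‖y - z‖ := by field_simp
    -- φ ε is Lipschitz on D for |ε| ≤ 1
    have hφlip : ∀ ε : ℝ, |ε| ≤ 1 →
        LipschitzOnWith ⟨1 + Real.sqrt n, by positivity⟩ (φ ε) D := by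
      intro ε hε
      refine lipschitzOnWith_iff_dist_le_mul.mpr ?_
      intro y hy z hz
      show dist _ _ ≤ (1 + Real.sqrt n) * dist y z
      rw [dist_eq_norm, dist_eq_norm]
      have hcoord : ∀ i : Fin n, (φ ε y - φ ε z) i =
          if hik : i = k then ε * (h y - h z) else (y - z) ⟨i, hik⟩ := by
        intro i
        rw [PiLp.sub_apply]
        by_cases hik : i = k
        · subst hik
          simp only [hφ_def, dif_pos]
          ring
        · simp only [hφ_def, dif_neg hik]
          rw [PiLp.sub_apply]
      have hnormsq : ‖φ ε y - φ ε z‖ ^ 2 = (ε * (h y - h z))^2 + ‖y - z‖^2 := by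
        rw [EuclideanSpace.norm_eq, Real.sq_sqrt (by positivity),
          EuclideanSpace.norm_eq, Real.sq_sqrt (by positivity)]
        rw [← Finset.sum_erase_add _ _ (Finset.mem_univ k)]
        have e1 : ‖(φ ε y - φ ε z) k‖^2 = (ε * (h y - h z))^2 := by
          rw [hcoord k, dif_pos rfl, Real.norm_eq_abs, sq_abs]
        have e2 : ∑ i ∈ Finset.univ.erase k, ‖(φ ε y - φ ε z) i‖^2
            = ∑ i : ι, ‖(y - z) i‖^2 := by
          rw [Finset.sum_subtype (p := fun i => i ≠ k) (Finset.univ.erase k)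
            (fun i => by simp [Finset.mem_erase]) (fun i => ‖(φ ε y - φ ε z) i‖^2)]
          apply Finset.sum_congr rfl
          intro i _
          rw [hcoord i.1, dif_neg i.2]
        rw [e1, e2, add_comm]
      have habs : 0 ≤ |ε * (h y - h z)| + ‖y - z‖ := by positivity
      have hXsq : ‖φ ε y - φ ε z‖^2 ≤ (|ε * (h y - h z)| + ‖y - z‖)^2 := by
        rw [hnormsq]
        nlinarith [sq_abs (ε * (h y - h z)), abs_nonneg (ε * (h y - h z)), norm_nonneg (y - z)]
      have hX : ‖φ ε y - φ ε z‖ ≤ |ε * (h y - h z)| + ‖y - z‖ := by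
        nlinarith [norm_nonneg (φ ε y - φ ε z)]
      have hεh : |ε * (h y - h z)| ≤ Real.sqrt n * ‖y - z‖ := by
        rw [abs_mul]
        calc |ε| * |h y - h z| ≤ 1 * (Real.sqrt n * ‖y - z‖) :=
              mul_le_mul hε (hlip y z hy hz) (abs_nonneg _) zero_le_one
          _ = Real.sqrt n * ‖y - z‖ := one_mul _
      nlinarith [norm_nonneg (y - z)]
    -- D has finite Hausdorff measure
    have hcard : (Fintype.card ι : ℝ) = d := by
      have h1 : Fintype.card ι = n - 1 := by
        have := Fintype.card_subtype_compl (fun i : Fin n => i = k)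
        simp only [Fintype.card_subtype_eq, Fintype.card_fin] at this
        exact this
      rw [h1, hd_def]
      push_cast [Nat.cast_sub hn]
      simp
    have hDfin : μH[d] D < ⊤ := by
      set P := EuclideanSpace.equiv ι ℝ with hP
      have hD_eq : D = ⇑(P.symm) '' (⇑P '' D) := by
        rw [← Set.image_comp]
        simp
      have hPD : ⇑P '' D ⊆ Metric.closedBall (0 : ι → ℝ) (‖P.toContinuousLinearMap‖ + 1) := by
        rintro _ ⟨y, hy, rfl⟩
        rw [mem_closedBall_zero_iff]
        have h1 : ‖P y‖ ≤ ‖P.toContinuousLinearMap‖ * ‖y‖ := P.toContinuousLinearMap.le_opNorm y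
        have h2 : ‖y‖ ≤ 1 := by simpa [hD_def] using mem_closedBall_zero_iff.mp hy
        have h3 : 0 ≤ ‖P.toContinuousLinearMap‖ := norm_nonneg _
        calc ‖P y‖ ≤ ‖P.toContinuousLinearMap‖ * ‖y‖ := h1
          _ ≤ ‖P.toContinuousLinearMap‖ * 1 := by gcongr
          _ ≤ ‖P.toContinuousLinearMap‖ + 1 := by linarith
      have hπfin : μH[d] (⇑P '' D) < ⊤ := by
        have : μH[d] (⇑P '' D) ≤ μH[d] (Metric.closedBall (0 : ι → ℝ) (‖P.toContinuousLinearMap‖ + 1)) :=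
          measure_mono hPD
        refine lt_of_le_of_lt this ?_
        rw [← hcard, hausdorffMeasure_pi_real]
        exact measure_closedBall_lt_top
      calc μH[d] D = μH[d] (⇑(P.symm) '' (⇑P '' D)) := by rw [← hD_eq]
        _ ≤ (‖P.symm.toContinuousLinearMap‖₊ : ENNReal)^d * μH[d] (⇑P '' D) := by
            have hle := (P.symm.toContinuousLinearMap.lipschitz.lipschitzOnWith
              (s := ⇑P '' D)).hausdorffMeasure_image_le hd
            simpa using hle
        _ < ⊤ := ENNReal.mul_lt_top (ENNReal.rpow_lt_top_of_nonneg hd ENNReal.coe_ne_top) hπfin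
    -- the set u
    refine ⟨φ 1 '' D ∪ φ (-1) '' D, ?_, ?_⟩
    · have h1 : μH[d] (φ 1 '' D) < ⊤ := by
        refine lt_of_le_of_lt ((hφlip 1 (by norm_num)).hausdorffMeasure_image_le hd) ?_
        exact ENNReal.mul_lt_top (ENNReal.rpow_lt_top_of_nonneg hd ENNReal.coe_ne_top) hDfin
      have h2 : μH[d] (φ (-1) '' D) < ⊤ := by
        refine lt_of_le_of_lt ((hφlip (-1) (by norm_num)).hausdorffMeasure_image_le hd) ?_
        exact ENNReal.mul_lt_top (ENNReal.rpow_lt_top_of_nonneg hd ENNReal.coe_ne_top) hDfin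
      exact lt_of_le_of_lt (measure_union_le _ _) (ENNReal.add_lt_top.mpr ⟨h1, h2⟩)
    · intro x hx hxk
      have hxn : ‖x‖ = 1 := mem_sphere_zero_iff_norm.mp hx
      have hsum : ∑ i : Fin n, (x i)^2 = 1 := by
        have := EuclideanSpace.norm_eq x
        rw [hxn] at this
        have h2 : ∑ i : Fin n, ‖x i‖^2 = 1 := by
          rw [eq_comm, Real.sqrt_eq_one] at this; exact this
        simpa [Real.norm_eq_abs, sq_abs] using h2
      set y : G := WithLp.toLp 2 (fun i : ι => x i.1) with hy_def
      have hynormsq : ‖y‖^2 = 1 - (x k)^2 := by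
        rw [EuclideanSpace.norm_eq, Real.sq_sqrt (by positivity)]
        have e2 : ∑ i : ι, ‖y i‖^2 = ∑ i ∈ Finset.univ.erase k, ‖x i‖^2 := by
          rw [Finset.sum_subtype (p := fun i => i ≠ k) (Finset.univ.erase k)
            (fun i => by simp [Finset.mem_erase]) (fun i => ‖x i‖^2)]
        rw [e2, Finset.sum_erase_eq_sub (Finset.mem_univ k)]
        simp only [Real.norm_eq_abs, sq_abs]
        rw [hsum]
      have hyD : y ∈ D := by
        rw [hD_def, mem_closedBall_zero_iff]
        nlinarith [norm_nonneg y, sq_nonneg (x k)]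
      have hymin : min (‖y‖^2) c = ‖y‖^2 := by
        apply min_eq_left
        rw [hynormsq, hc_def]
        linarith
      have hhy : h y = |x k| := by
        rw [hh_def]
        simp only
        rw [hymin, hynormsq]
        rw [show (1 - (1 - (x k)^2)) = (x k)^2 by ring, Real.sqrt_sq_eq_abs]
      set ε : ℝ := if 0 ≤ x k then 1 else -1 with hε_def
      have hφx : φ ε y = x := by
        ext i
        by_cases hik : i = k
        · subst hik
          simp only [hφ_def]
          rw [dif_pos trivial, hhy, hε_def]
          by_cases hs : 0 ≤ x i
          · rw [if_pos hs, abs_of_nonneg hs, one_mul]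
          · rw [if_neg hs, abs_of_neg (lt_of_not_ge hs)]; ring
        · simp only [hφ_def]
          rw [dif_neg hik]
      by_cases hs : 0 ≤ x k
      · left
        refine ⟨y, hyD, ?_⟩
        rw [← hφx, hε_def, if_pos hs]
      · right
        refine ⟨y, hyD, ?_⟩
        rw [← hφx, hε_def, if_neg hs]
  choose u hu hcover using main
  have hsub : Metric.sphere (0 : EuclideanSpace ℝ (Fin n)) 1 ⊆ ⋃ k : Fin n, u k := by
    intro x hx
    have hxn : ‖x‖ = 1 := mem_sphere_zero_iff_norm.mp hx
    have hsum : ∑ i : Fin n, (x i)^2 = 1 := by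
      have := EuclideanSpace.norm_eq x
      rw [hxn] at this
      have h2 : ∑ i : Fin n, ‖x i‖^2 = 1 := by
        rw [eq_comm, Real.sqrt_eq_one] at this; exact this
      simpa [Real.norm_eq_abs, sq_abs] using h2
    have hconst : ∑ _i : Fin n, (n:ℝ)⁻¹ ≤ ∑ i : Fin n, (x i)^2 := by
      rw [hsum, Finset.sum_const, Finset.card_univ, Fintype.card_fin, nsmul_eq_mul]
      rw [mul_inv_cancel₀ (ne_of_gt hn0)]
    obtain ⟨k, _, hk⟩ := Finset.exists_le_of_sum_le Finset.univ_nonempty hconst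
    exact Set.mem_iUnion.mpr ⟨k, hcover k x hx hk⟩
  calc μH[d] (Metric.sphere (0 : EuclideanSpace ℝ (Fin n)) 1)
      ≤ μH[d] (⋃ k : Fin n, u k) := measure_mono hsub
    _ ≤ ∑' k : Fin n, μH[d] (u k) := measure_iUnion_le u
    _ < ⊤ := by
        rw [tsum_fintype]
        exact ENNReal.sum_lt_top.mpr (fun k _ => hu k)


namespace MassAux

noncomputable def mDA {n : ℕ} (a : EuclideanSpace ℝ (Fin n) → Matrix (Fin n) (Fin n) ℝ)
    (i j k : Fin n) (x : EuclideanSpace ℝ (Fin n)) : ℝ :=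
  fderiv ℝ (fun y => a y i j) x (EuclideanSpace.single k 1)

noncomputable def mF {n : ℕ} (f : EuclideanSpace ℝ (Fin n) → ℝ) (k : Fin n)
    (x : EuclideanSpace ℝ (Fin n)) : ℝ :=
  fderiv ℝ f x (EuclideanSpace.single k 1)

noncomputable def mNu {n : ℕ} (j : Fin n) (x : EuclideanSpace ℝ (Fin n)) : ℝ := x j / ‖x‖

noncomputable def mErr {n : ℕ} (a : EuclideanSpace ℝ (Fin n) → Matrix (Fin n) (Fin n) ℝ)
    (f : EuclideanSpace ℝ (Fin n) → ℝ) (x : EuclideanSpace ℝ (Fin n)) : ℝ :=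
  ∑ i : Fin n, ∑ j : Fin n,
    ((f x - 1) * (mDA a i j i x - mDA a i i j x) +
      (a x i j * mF f i x - a x i i * mF f j x)) * mNu j x

noncomputable def mPhi1 {n : ℕ} (a : EuclideanSpace ℝ (Fin n) → Matrix (Fin n) (Fin n) ℝ)
    (f : EuclideanSpace ℝ (Fin n) → ℝ) (x : EuclideanSpace ℝ (Fin n)) : ℝ :=
  ∑ i : Fin n, ∑ j : Fin n,
    ((f x * mDA a i j i x + ((if i = j then (1:ℝ) else 0) + a x i j) * mF f i x) -
      (f x * mDA a i i j x + ((1:ℝ) + a x i i) * mF f j x)) * mNu j x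

noncomputable def mPhi2 {n : ℕ} (a : EuclideanSpace ℝ (Fin n) → Matrix (Fin n) (Fin n) ℝ)
    (x : EuclideanSpace ℝ (Fin n)) : ℝ :=
  ∑ i : Fin n, ∑ j : Fin n, (mDA a i j i x - mDA a i i j x) * mNu j x

noncomputable def mPhi3 {n : ℕ} (f : EuclideanSpace ℝ (Fin n) → ℝ)
    (x : EuclideanSpace ℝ (Fin n)) : ℝ :=
  ∑ j : Fin n, mF f j x * mNu j x

/-- Pure algebra: combination identity. -/
lemma sum_identity {n : ℕ} (DA1 DA2 : Fin n → Fin n → ℝ) (Fv ν : Fin n → ℝ) (fx : ℝ)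
    (aE : Fin n → Fin n → ℝ) :
    (∑ i : Fin n, ∑ j : Fin n,
        ((fx * DA1 i j + ((if i = j then (1:ℝ) else 0) + aE i j) * Fv i) -
          (fx * DA2 i j + ((1:ℝ) + aE i i) * Fv j)) * ν j)
      - (∑ i : Fin n, ∑ j : Fin n, (DA1 i j - DA2 i j) * ν j)
      - (1 - (n:ℝ)) * (∑ j : Fin n, Fv j * ν j)
    = ∑ i : Fin n, ∑ j : Fin n,
        ((fx - 1) * (DA1 i j - DA2 i j) + (aE i j * Fv i - aE i i * Fv j)) * ν j := by
  have h1 : ∀ i j : Fin n,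
      ((fx * DA1 i j + ((if i = j then (1:ℝ) else 0) + aE i j) * Fv i) -
        (fx * DA2 i j + ((1:ℝ) + aE i i) * Fv j)) * ν j
      - (DA1 i j - DA2 i j) * ν j
      = ((fx - 1) * (DA1 i j - DA2 i j) + (aE i j * Fv i - aE i i * Fv j)) * ν j
        + ((if i = j then (1:ℝ) else 0) * (Fv i * ν j) - Fv j * ν j) := by
    intro i j; ring
  have h2 : ∑ i : Fin n, ∑ j : Fin n,
      (((fx * DA1 i j + ((if i = j then (1:ℝ) else 0) + aE i j) * Fv i) -
        (fx * DA2 i j + ((1:ℝ) + aE i i) * Fv j)) * ν j - (DA1 i j - DA2 i j) * ν j)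
      = (∑ i : Fin n, ∑ j : Fin n,
          ((fx - 1) * (DA1 i j - DA2 i j) + (aE i j * Fv i - aE i i * Fv j)) * ν j)
        + ((∑ i : Fin n, Fv i * ν i) - (n:ℝ) * ∑ j : Fin n, Fv j * ν j) := by
    simp only [h1, Finset.sum_add_distrib, Finset.sum_sub_distrib]
    congr 1
    congr 1
    · apply Finset.sum_congr rfl
      intro i _
      simp only [ite_mul, zero_mul, one_mul]
      rw [Finset.sum_ite_eq]
      simp
    · rw [Finset.sum_const, Finset.card_univ, Fintype.card_fin, nsmul_eq_mul]
  have h3 : ∑ i : Fin n, ∑ j : Fin n,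
      (((fx * DA1 i j + ((if i = j then (1:ℝ) else 0) + aE i j) * Fv i) -
        (fx * DA2 i j + ((1:ℝ) + aE i i) * Fv j)) * ν j - (DA1 i j - DA2 i j) * ν j)
      = (∑ i : Fin n, ∑ j : Fin n,
          ((fx * DA1 i j + ((if i = j then (1:ℝ) else 0) + aE i j) * Fv i) -
            (fx * DA2 i j + ((1:ℝ) + aE i i) * Fv j)) * ν j)
        - ∑ i : Fin n, ∑ j : Fin n, (DA1 i j - DA2 i j) * ν j := by
    simp only [Finset.sum_sub_distrib]
  rw [h3] at h2
  rw [show (∑ i : Fin n, ∑ j : Fin n,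
        ((fx * DA1 i j + ((if i = j then (1:ℝ) else 0) + aE i j) * Fv i) -
          (fx * DA2 i j + ((1:ℝ) + aE i i) * Fv j)) * ν j)
      - (∑ i : Fin n, ∑ j : Fin n, (DA1 i j - DA2 i j) * ν j)
      - (1 - (n:ℝ)) * (∑ j : Fin n, Fv j * ν j)
      = (∑ i : Fin n, ∑ j : Fin n,
        ((fx * DA1 i j + ((if i = j then (1:ℝ) else 0) + aE i j) * Fv i) -
          (fx * DA2 i j + ((1:ℝ) + aE i i) * Fv j)) * ν j
      - (∑ i : Fin n, ∑ j : Fin n, (DA1 i j - DA2 i j) * ν j))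
      - (1 - (n:ℝ)) * (∑ j : Fin n, Fv j * ν j) from by ring]
  rw [h2]
  ring

lemma coord_le_norm {n : ℕ} (x : EuclideanSpace ℝ (Fin n)) (j : Fin n) : |x j| ≤ ‖x‖ := by
  rw [EuclideanSpace.norm_eq, ← Real.sqrt_sq_eq_abs]
  apply Real.sqrt_le_sqrt
  have := Finset.single_le_sum (f := fun i => ‖x i‖^2)
    (fun i _ => by positivity) (Finset.mem_univ j)
  simpa [Real.norm_eq_abs, sq_abs] using this

lemma sum_decomp {n : ℕ} (x : EuclideanSpace ℝ (Fin n)) :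
    ∑ j : Fin n, x j • EuclideanSpace.single j (1:ℝ) = x := by
  have := (EuclideanSpace.basisFun (Fin n) ℝ).sum_repr x
  simpa [EuclideanSpace.basisFun_apply, EuclideanSpace.basisFun_repr] using this

lemma integrableOn_sphere {n : ℕ} (d : ℝ) {g : EuclideanSpace ℝ (Fin n) → ℝ} {r : ℝ}
    (hg : ContinuousOn g (Metric.sphere (0 : EuclideanSpace ℝ (Fin n)) r))
    (hfin : μH[d] (Metric.sphere (0 : EuclideanSpace ℝ (Fin n)) r) ≠ ⊤) :
    IntegrableOn g (Metric.sphere (0 : EuclideanSpace ℝ (Fin n)) r) μH[d] := by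
  obtain ⟨M, hM⟩ :=
    (isCompact_sphere (0 : EuclideanSpace ℝ (Fin n)) r).exists_bound_of_continuousOn hg
  have hmeas : AEStronglyMeasurable g (μH[d].restrict (Metric.sphere (0 : EuclideanSpace ℝ (Fin n)) r)) :=
    hg.aestronglyMeasurable Metric.isClosed_sphere.measurableSet
  refine Integrable.mono' (g := fun _ => M) ?_ hmeas ?_
  · exact integrableOn_const hfin
  · exact (ae_restrict_iff' Metric.isClosed_sphere.measurableSet).mpr (ae_of_all _ hM)

end MassAux

lemma MassAux.err_bound {n : ℕ} {R C τ : ℝ} (hR : 0 < R) (hC : 0 ≤ C)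
    {a : EuclideanSpace ℝ (Fin n) → Matrix (Fin n) (Fin n) ℝ}
    (ha_bound : ∀ (i j : Fin n) (x : EuclideanSpace ℝ (Fin n)), R ≤ ‖x‖ →
      |a x i j| ≤ C * ‖x‖ ^ (-τ))
    (ha_deriv : ∀ (i j k : Fin n) (x : EuclideanSpace ℝ (Fin n)), R ≤ ‖x‖ →
      |fderiv ℝ (fun y => a y i j) x (EuclideanSpace.single k 1)| ≤ C * ‖x‖ ^ (-τ - 1))
    {f : EuclideanSpace ℝ (Fin n) → ℝ}
    (hf_one : ∀ x : EuclideanSpace ℝ (Fin n), R ≤ ‖x‖ → |f x - 1| ≤ C * ‖x‖ ^ (-τ))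
    (hf_grad : ∀ x : EuclideanSpace ℝ (Fin n), R ≤ ‖x‖ →
      ‖gradient f x‖ ≤ C * ‖x‖ ^ (-τ - 1))
    (x : EuclideanSpace ℝ (Fin n)) (hx : R ≤ ‖x‖) :
    |MassAux.mErr a f x| ≤ (n:ℝ)^2 * (4 * C^2) * ‖x‖ ^ (-(2*τ) - 1) := by
  have hxpos : 0 < ‖x‖ := lt_of_lt_of_le hR hx
  set p : ℝ := ‖x‖ ^ (-τ) with hp_def
  set q : ℝ := ‖x‖ ^ (-τ - 1) with hq_def
  have hp0 : 0 ≤ p := Real.rpow_nonneg (norm_nonneg x) _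
  have hq0 : 0 ≤ q := Real.rpow_nonneg (norm_nonneg x) _
  have hpq : p * q = ‖x‖ ^ (-(2*τ) - 1) := by
    rw [hp_def, hq_def, ← Real.rpow_add hxpos]
    congr 1; ring
  have hF : ∀ k : Fin n, |MassAux.mF f k x| ≤ C * q := by
    intro k
    have hg : gradient f x =
        (InnerProductSpace.toDual ℝ (EuclideanSpace ℝ (Fin n))).symm (fderiv ℝ f x) := rfl
    have h1 : MassAux.mF f k x = inner ℝ (gradient f x) (EuclideanSpace.single k (1:ℝ)) := by
      rw [hg, InnerProductSpace.toDual_symm_apply]; rfl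
    rw [h1]
    calc |(inner ℝ (gradient f x) (EuclideanSpace.single k (1:ℝ)) : ℝ)|
        ≤ ‖gradient f x‖ * ‖EuclideanSpace.single k (1:ℝ)‖ := abs_real_inner_le_norm _ _
      _ = ‖gradient f x‖ := by rw [EuclideanSpace.norm_single]; simp
      _ ≤ C * q := hf_grad x hx
  have hν : ∀ j : Fin n, |MassAux.mNu j x| ≤ 1 := by
    intro j
    rw [MassAux.mNu, abs_div, abs_of_pos hxpos, div_le_one hxpos]
    exact MassAux.coord_le_norm x j
  have tri : ∀ u v : ℝ, |u - v| ≤ |u| + |v| := fun u v => by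
    simpa [sub_eq_add_neg] using abs_add_le u (-v)
  have hterm : ∀ i j : Fin n,
      |((f x - 1) * (MassAux.mDA a i j i x - MassAux.mDA a i i j x) +
        (a x i j * MassAux.mF f i x - a x i i * MassAux.mF f j x)) * MassAux.mNu j x|
      ≤ 4 * C^2 * ‖x‖ ^ (-(2*τ) - 1) := by
    intro i j
    have hDA1 : |MassAux.mDA a i j i x| ≤ C * q := ha_deriv i j i x hx
    have hDA2 : |MassAux.mDA a i i j x| ≤ C * q := ha_deriv i i j x hx
    have ha1 : |a x i j| ≤ C * p := ha_bound i j x hx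
    have ha2 : |a x i i| ≤ C * p := ha_bound i i x hx
    have hf1 : |f x - 1| ≤ C * p := hf_one x hx
    have hA : |(f x - 1) * (MassAux.mDA a i j i x - MassAux.mDA a i i j x)|
        ≤ (C * p) * (C * q + C * q) := by
      rw [abs_mul]
      apply mul_le_mul hf1 ((tri _ _).trans (add_le_add hDA1 hDA2)) (abs_nonneg _) (by positivity)
    have hB : |a x i j * MassAux.mF f i x - a x i i * MassAux.mF f j x|
        ≤ (C * p) * (C * q) + (C * p) * (C * q) := by
      refine (tri _ _).trans (add_le_add ?_ ?_)
      · rw [abs_mul]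
        exact mul_le_mul ha1 (hF i) (abs_nonneg _) (by positivity)
      · rw [abs_mul]
        exact mul_le_mul ha2 (hF j) (abs_nonneg _) (by positivity)
    calc |((f x - 1) * (MassAux.mDA a i j i x - MassAux.mDA a i i j x) +
          (a x i j * MassAux.mF f i x - a x i i * MassAux.mF f j x)) * MassAux.mNu j x|
        = |(f x - 1) * (MassAux.mDA a i j i x - MassAux.mDA a i i j x) +
          (a x i j * MassAux.mF f i x - a x i i * MassAux.mF f j x)| * |MassAux.mNu j x| :=
          abs_mul _ _
      _ ≤ (|(f x - 1) * (MassAux.mDA a i j i x - MassAux.mDA a i i j x)| +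
          |a x i j * MassAux.mF f i x - a x i i * MassAux.mF f j x|) * 1 := by
          apply mul_le_mul (abs_add_le _ _) (hν j) (abs_nonneg _) (by positivity)
      _ ≤ ((C * p) * (C * q + C * q) + ((C * p) * (C * q) + (C * p) * (C * q))) * 1 := by
          have := add_le_add hA hB
          nlinarith [this]
      _ = 4 * C^2 * (p * q) := by ring
      _ = 4 * C^2 * ‖x‖ ^ (-(2*τ) - 1) := by rw [hpq]
  calc |MassAux.mErr a f x|
      ≤ ∑ i : Fin n, |∑ j : Fin n,
        ((f x - 1) * (MassAux.mDA a i j i x - MassAux.mDA a i i j x) +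
          (a x i j * MassAux.mF f i x - a x i i * MassAux.mF f j x)) * MassAux.mNu j x| :=
        Finset.abs_sum_le_sum_abs _ _
    _ ≤ ∑ _i : Fin n, ∑ _j : Fin n, (4 * C^2 * ‖x‖ ^ (-(2*τ) - 1)) := by
        apply Finset.sum_le_sum
        intro i _
        exact (Finset.abs_sum_le_sum_abs _ _).trans (Finset.sum_le_sum fun j _ => hterm i j)
    _ = (n:ℝ)^2 * (4 * C^2) * ‖x‖ ^ (-(2*τ) - 1) := by
        simp [Finset.sum_const, Finset.card_univ, nsmul_eq_mul]
        ring


open MassAux in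
set_option maxHeartbeats 1600000 in
/-- mass-change computation of Theorem 5. With
`g_{ij} = δ_{ij} + a_{ij}` asymptotically flat of order `τ > (n-2)/2` and `f`
asymptotic to `1` with `‖∇f‖ = O(‖x‖^(-τ-1))`, one has
`𝔪_r(f·g) - 𝔪_r(g) - (1-n)∫_{S_r}⟨∇f, ν⟩ dσ → 0` as `r → ∞`. -/
theorem mass_change_formula (n : ℕ) (hn : 3 ≤ n) (R C τ : ℝ)
    (hR : 0 < R) (hC : 0 ≤ C) (hτ : ((n : ℝ) - 2) / 2 < τ)
    (a : EuclideanSpace ℝ (Fin n) → Matrix (Fin n) (Fin n) ℝ)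
    (ha_diff : ∀ (i j : Fin n) (x : EuclideanSpace ℝ (Fin n)), R ≤ ‖x‖ →
      DifferentiableAt ℝ (fun y => a y i j) x)
    (ha_C1 : ∀ i j : Fin n, ContinuousOn (fun x => fderiv ℝ (fun y => a y i j) x)
      {x : EuclideanSpace ℝ (Fin n) | R ≤ ‖x‖})
    (ha_bound : ∀ (i j : Fin n) (x : EuclideanSpace ℝ (Fin n)), R ≤ ‖x‖ →
      |a x i j| ≤ C * ‖x‖ ^ (-τ))
    (ha_deriv : ∀ (i j k : Fin n) (x : EuclideanSpace ℝ (Fin n)), R ≤ ‖x‖ →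
      |fderiv ℝ (fun y => a y i j) x (EuclideanSpace.single k 1)| ≤ C * ‖x‖ ^ (-τ - 1))
    (f : EuclideanSpace ℝ (Fin n) → ℝ)
    (hf_diff : ∀ x : EuclideanSpace ℝ (Fin n), R ≤ ‖x‖ → DifferentiableAt ℝ f x)
    (hf_C1 : ContinuousOn (fun x => fderiv ℝ f x) {x : EuclideanSpace ℝ (Fin n) | R ≤ ‖x‖})
    (hf_one : ∀ x : EuclideanSpace ℝ (Fin n), R ≤ ‖x‖ → |f x - 1| ≤ C * ‖x‖ ^ (-τ))
    (hf_grad : ∀ x : EuclideanSpace ℝ (Fin n), R ≤ ‖x‖ →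
      ‖gradient f x‖ ≤ C * ‖x‖ ^ (-τ - 1)) :
    Tendsto
      (fun r : ℝ =>
        massSurfaceIntegral n (fun x => f x • ((1 : Matrix (Fin n) (Fin n) ℝ) + a x)) r -
        massSurfaceIntegral n (fun x => (1 : Matrix (Fin n) (Fin n) ℝ) + a x) r -
        ((1 : ℝ) - (n : ℝ)) *
          ∫ x in Metric.sphere (0 : EuclideanSpace ℝ (Fin n)) r,
            (inner ℝ (gradient f x) (‖x‖⁻¹ • x) : ℝ) ∂(μH[(n : ℝ) - 1]))
      atTop (nhds 0) := by
  classical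
  haveI : Nonempty (Fin n) := ⟨⟨0, by omega⟩⟩
  have hn1 : 1 ≤ n := by omega
  have hn3 : (3:ℝ) ≤ (n:ℝ) := by exact_mod_cast hn
  set d : ℝ := (n:ℝ) - 1 with hd_def
  have hd : 0 ≤ d := by rw [hd_def]; linarith
  set A : ENNReal := μH[d] (Metric.sphere (0 : EuclideanSpace ℝ (Fin n)) 1) with hA_def
  have hA : A ≠ ⊤ := (unit_sphere_hausdorff_lt_top n hn1).ne
  have hsph : ∀ r : ℝ, 0 < r →
      μH[d] (Metric.sphere (0 : EuclideanSpace ℝ (Fin n)) r) = (‖r‖₊ ^ d) • A := by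
    intro r hr
    have h1 : r • (Metric.sphere (0 : EuclideanSpace ℝ (Fin n)) 1)
        = Metric.sphere (0 : EuclideanSpace ℝ (Fin n)) r := by
      rw [smul_sphere r (0 : EuclideanSpace ℝ (Fin n)) zero_le_one]
      simp [Real.norm_eq_abs, abs_of_pos hr]
    rw [← h1]
    exact Measure.hausdorffMeasure_smul₀ hd (ne_of_gt hr) _
  have hfin : ∀ r : ℝ, 0 < r →
      μH[d] (Metric.sphere (0 : EuclideanSpace ℝ (Fin n)) r) ≠ ⊤ := by
    intro r hr
    rw [hsph r hr, show (‖r‖₊ ^ d) • A = (((‖r‖₊ ^ d) : NNReal) : ENNReal) * A from rfl]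
    exact ENNReal.mul_ne_top ENNReal.coe_ne_top hA
  have htoReal : ∀ r : ℝ, 0 < r →
      (μH[d] (Metric.sphere (0 : EuclideanSpace ℝ (Fin n)) r)).toReal = r ^ d * A.toReal := by
    intro r hr
    rw [hsph r hr, show (‖r‖₊ ^ d) • A = (((‖r‖₊ ^ d) : NNReal) : ENNReal) * A from rfl,
      ENNReal.toReal_mul]
    congr 1
    rw [ENNReal.coe_toReal, NNReal.coe_rpow, coe_nnnorm, Real.norm_eq_abs, abs_of_pos hr]
  -- derivative expansions
  have hfd_fg : ∀ (i j : Fin n) (x : EuclideanSpace ℝ (Fin n)), R ≤ ‖x‖ →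
      fderiv ℝ (fun y => (f y • ((1 : Matrix (Fin n) (Fin n) ℝ) + a y)) i j) x
        = f x • fderiv ℝ (fun y => a y i j) x
          + ((if i = j then (1:ℝ) else 0) + a x i j) • fderiv ℝ f x := by
    intro i j x hx
    have hfun : (fun y => (f y • ((1 : Matrix (Fin n) (Fin n) ℝ) + a y)) i j)
        = fun y => f y * ((if i = j then (1:ℝ) else 0) + a y i j) := by
      funext y
      simp [Matrix.smul_apply, Matrix.add_apply, Matrix.one_apply, smul_eq_mul]
    rw [hfun]
    have h1 : DifferentiableAt ℝ (fun y => (if i = j then (1:ℝ) else 0) + a y i j) x :=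
      (ha_diff i j x hx).const_add _
    rw [fderiv_fun_mul (hf_diff x hx) h1, fderiv_const_add]
  have hfd_g : ∀ (i j : Fin n) (x : EuclideanSpace ℝ (Fin n)),
      fderiv ℝ (fun y => (((1 : Matrix (Fin n) (Fin n) ℝ) + a y)) i j) x
        = fderiv ℝ (fun y => a y i j) x := by
    intro i j x
    have hfun : (fun y => (((1 : Matrix (Fin n) (Fin n) ℝ) + a y)) i j)
        = fun y => (1 : Matrix (Fin n) (Fin n) ℝ) i j + a y i j := by
      funext y; simp [Matrix.add_apply]
    rw [hfun, fderiv_const_add]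
  -- continuity on Ω
  set Ω : Set (EuclideanSpace ℝ (Fin n)) := {x | R ≤ ‖x‖} with hΩ_def
  have hνc : ∀ j : Fin n, ContinuousOn (mNu (n := n) j) Ω := by
    intro j
    have hnormc : ContinuousOn (fun x : EuclideanSpace ℝ (Fin n) => ‖x‖) Ω :=
      continuous_norm.continuousOn
    apply ContinuousOn.div ((PiLp.continuous_apply (p := 2) (β := fun _ : Fin n => ℝ) j).continuousOn) hnormc
    intro x hx
    exact ne_of_gt (lt_of_lt_of_le hR hx)
  have hDAc : ∀ i j k : Fin n, ContinuousOn (mDA a i j k) Ω := by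
    intro i j k
    exact (ha_C1 i j).clm_apply continuousOn_const
  have hFc : ∀ k : Fin n, ContinuousOn (mF f k) Ω := by
    intro k
    exact hf_C1.clm_apply continuousOn_const
  have hfc : ContinuousOn f Ω := fun x hx => ((hf_diff x hx).continuousAt).continuousWithinAt
  have hac : ∀ i j : Fin n, ContinuousOn (fun x => a x i j) Ω :=
    fun i j x hx => ((ha_diff i j x hx).continuousAt).continuousWithinAt
  have hφ1c : ContinuousOn (mPhi1 a f) Ω := by
    apply continuousOn_finset_sum
    intro i _
    apply continuousOn_finset_sum
    intro j _
    exact (((hfc.mul (hDAc i j i)).add ((continuousOn_const.add (hac i j)).mul (hFc i))).sub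
      ((hfc.mul (hDAc i i j)).add ((continuousOn_const.add (hac i i)).mul (hFc j)))).mul (hνc j)
  have hφ2c : ContinuousOn (mPhi2 a) Ω := by
    apply continuousOn_finset_sum
    intro i _
    apply continuousOn_finset_sum
    intro j _
    exact ((hDAc i j i).sub (hDAc i i j)).mul (hνc j)
  have hφ3c : ContinuousOn (mPhi3 f) Ω := by
    apply continuousOn_finset_sum
    intro j _
    exact (hFc j).mul (hνc j)
  have herrc : ContinuousOn (mErr a f) Ω := by
    apply continuousOn_finset_sum
    intro i _
    apply continuousOn_finset_sum
    intro j _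
    exact (((hfc.sub continuousOn_const).mul ((hDAc i j i).sub (hDAc i i j))).add
      (((hac i j).mul (hFc i)).sub ((hac i i).mul (hFc j)))).mul (hνc j)
  -- squeeze
  apply squeeze_zero_norm'
    (a := fun r : ℝ => ((n:ℝ)^2 * (4 * C^2) * A.toReal) * r ^ ((n:ℝ) - 2 - 2*τ))
  · filter_upwards [eventually_ge_atTop (max R 1)] with r hr
    have hrR : R ≤ r := le_trans (le_max_left _ _) hr
    have hr1 : (1:ℝ) ≤ r := le_trans (le_max_right _ _) hr
    have hr0 : 0 < r := lt_of_lt_of_le zero_lt_one hr1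
    have hSmeas : MeasurableSet (Metric.sphere (0 : EuclideanSpace ℝ (Fin n)) r) :=
      Metric.isClosed_sphere.measurableSet
    have hsub : Metric.sphere (0 : EuclideanSpace ℝ (Fin n)) r ⊆ Ω := by
      intro x hx
      rw [hΩ_def, Set.mem_setOf_eq, mem_sphere_zero_iff_norm.mp hx]
      exact hrR
    have hxR : ∀ x ∈ Metric.sphere (0 : EuclideanSpace ℝ (Fin n)) r, R ≤ ‖x‖ := fun x hx => hsub hx
    -- integrability
    have hInt1 : IntegrableOn (mPhi1 a f) (Metric.sphere (0 : EuclideanSpace ℝ (Fin n)) r) μH[d] :=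
      integrableOn_sphere d (hφ1c.mono hsub) (hfin r hr0)
    have hInt2 : IntegrableOn (mPhi2 a) (Metric.sphere (0 : EuclideanSpace ℝ (Fin n)) r) μH[d] :=
      integrableOn_sphere d (hφ2c.mono hsub) (hfin r hr0)
    have hInt3 : IntegrableOn (mPhi3 f) (Metric.sphere (0 : EuclideanSpace ℝ (Fin n)) r) μH[d] :=
      integrableOn_sphere d (hφ3c.mono hsub) (hfin r hr0)
    have hIntErr : IntegrableOn (mErr a f) (Metric.sphere (0 : EuclideanSpace ℝ (Fin n)) r) μH[d] :=
      integrableOn_sphere d (herrc.mono hsub) (hfin r hr0)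
    -- the three integral representations
    have hI1 : massSurfaceIntegral n (fun x => f x • ((1 : Matrix (Fin n) (Fin n) ℝ) + a x)) r
        = ∫ x in Metric.sphere (0 : EuclideanSpace ℝ (Fin n)) r, mPhi1 a f x ∂μH[d] := by
      rw [massSurfaceIntegral]
      apply setIntegral_congr_fun hSmeas
      intro x hx
      apply Finset.sum_congr rfl
      intro i _
      apply Finset.sum_congr rfl
      intro j _
      rw [hfd_fg i j x (hxR x hx), hfd_fg i i x (hxR x hx)]
      simp only [ContinuousLinearMap.add_apply, ContinuousLinearMap.coe_smul',
        Pi.smul_apply, smul_eq_mul, mDA, mF, mNu, if_pos rfl]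
      norm_num
    have hI2 : massSurfaceIntegral n (fun x => (1 : Matrix (Fin n) (Fin n) ℝ) + a x) r
        = ∫ x in Metric.sphere (0 : EuclideanSpace ℝ (Fin n)) r, mPhi2 a x ∂μH[d] := by
      rw [massSurfaceIntegral]
      apply setIntegral_congr_fun hSmeas
      intro x hx
      apply Finset.sum_congr rfl
      intro i _
      apply Finset.sum_congr rfl
      intro j _
      rw [hfd_g i j x, hfd_g i i x]
      rfl
    have hI3 : ∫ x in Metric.sphere (0 : EuclideanSpace ℝ (Fin n)) r,
          (inner ℝ (gradient f x) (‖x‖⁻¹ • x) : ℝ) ∂μH[d]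
        = ∫ x in Metric.sphere (0 : EuclideanSpace ℝ (Fin n)) r, mPhi3 f x ∂μH[d] := by
      apply setIntegral_congr_fun hSmeas
      intro x hx
      have hxpos : 0 < ‖x‖ := lt_of_lt_of_le hR (hxR x hx)
      have hℓ : (inner ℝ (gradient f x) (‖x‖⁻¹ • x) : ℝ) = ‖x‖⁻¹ * fderiv ℝ f x x := by
        rw [real_inner_smul_right]
        congr 1
        have hg : gradient f x =
            (InnerProductSpace.toDual ℝ (EuclideanSpace ℝ (Fin n))).symm (fderiv ℝ f x) := rfl
        rw [hg, InnerProductSpace.toDual_symm_apply]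
      have hdx : fderiv ℝ f x x = ∑ j : Fin n, x j * mF f j x := by
        have h0 : fderiv ℝ f x x
            = fderiv ℝ f x (∑ j : Fin n, x j • EuclideanSpace.single j (1:ℝ)) := by
          rw [sum_decomp]
        rw [h0, map_sum]
        apply Finset.sum_congr rfl
        intro j _
        rw [ContinuousLinearMap.map_smul, smul_eq_mul]
        rfl
      show (inner ℝ (gradient f x) (‖x‖⁻¹ • x) : ℝ) = mPhi3 f x
      rw [hℓ, hdx, Finset.mul_sum]
      apply Finset.sum_congr rfl
      intro j _
      rw [mF, mNu]
      field_simp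
    have hInt12 : IntegrableOn (fun x => mPhi1 a f x - mPhi2 a x)
        (Metric.sphere (0 : EuclideanSpace ℝ (Fin n)) r) μH[d] := hInt1.sub hInt2
    have hInt3' : IntegrableOn (fun x => (1 - (n:ℝ)) * mPhi3 f x)
        (Metric.sphere (0 : EuclideanSpace ℝ (Fin n)) r) μH[d] := hInt3.const_mul _
    rw [hI1, hI2, hI3, ← integral_const_mul,
      ← integral_sub hInt1 hInt2, ← integral_sub hInt12 hInt3']
    have hcongr : ∫ x in Metric.sphere (0 : EuclideanSpace ℝ (Fin n)) r,
          (mPhi1 a f x - mPhi2 a x - (1 - (n:ℝ)) * mPhi3 f x) ∂μH[d]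
        = ∫ x in Metric.sphere (0 : EuclideanSpace ℝ (Fin n)) r, mErr a f x ∂μH[d] := by
      apply setIntegral_congr_fun hSmeas
      intro x _
      show mPhi1 a f x - mPhi2 a x - (1 - (n:ℝ)) * mPhi3 f x = mErr a f x
      rw [mPhi1, mPhi2, mPhi3, mErr]
      exact sum_identity (fun i j => mDA a i j i x) (fun i j => mDA a i i j x)
        (fun k => mF f k x) (fun j => mNu j x) (f x) (fun i j => a x i j)
    rw [hcongr]
    -- the bound
    have hb : ∀ x ∈ Metric.sphere (0 : EuclideanSpace ℝ (Fin n)) r,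
        ‖mErr a f x‖ ≤ (n:ℝ)^2 * (4 * C^2) * r ^ (-(2*τ) - 1) := by
      intro x hx
      have := err_bound hR hC ha_bound ha_deriv hf_one hf_grad x (hxR x hx)
      rw [mem_sphere_zero_iff_norm.mp hx] at this
      simpa [Real.norm_eq_abs] using this
    calc ‖∫ x in Metric.sphere (0 : EuclideanSpace ℝ (Fin n)) r, mErr a f x ∂μH[d]‖
        ≤ ((n:ℝ)^2 * (4 * C^2) * r ^ (-(2*τ) - 1)) *
            (μH[d] (Metric.sphere (0 : EuclideanSpace ℝ (Fin n)) r)).toReal :=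
          norm_setIntegral_le_of_norm_le_const (lt_top_iff_ne_top.mpr (hfin r hr0)) hb
      _ = ((n:ℝ)^2 * (4 * C^2) * A.toReal) * r ^ ((n:ℝ) - 2 - 2*τ) := by
          rw [htoReal r hr0]
          rw [show ((n:ℝ) - 2 - 2*τ) = (-(2*τ) - 1) + d from by rw [hd_def]; ring]
          rw [Real.rpow_add hr0]
          ring
  · have h0 : (0:ℝ) < 2*τ + 2 - (n:ℝ) := by
      have : ((n:ℝ) - 2) / 2 < τ := hτ
      linarith
    have hl := (tendsto_rpow_neg_atTop h0).const_mul ((n:ℝ)^2 * (4 * C^2) * A.toReal)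
    rw [mul_zero] at hl
    have heq : (fun r : ℝ => ((n:ℝ)^2 * (4 * C^2) * A.toReal) * r ^ ((n:ℝ) - 2 - 2*τ))
        = fun r : ℝ => ((n:ℝ)^2 * (4 * C^2) * A.toReal) * r ^ (-(2*τ + 2 - (n:ℝ))) := by
      funext r
      rw [show ((n:ℝ) - 2 - 2*τ) = -(2*τ + 2 - (n:ℝ)) from by ring]
    rw [heq]
    exact hl
end

section
/- Let n ≥ 3, R > 0, C ≥ 0, ε > 0 and τ > (n−2)/2. Let a : ℝⁿ → Matrix (Fin n) (Fin n) ℝ be continuously differentiable on E_R with |a_{ij}(x)| ≤ C‖x‖^(−τ) and |∂_k a_{ij}(x)| ≤ C‖x‖^(−τ−1) on E_R, and set g_{ij} = δ_{ij} + a_{ij}. Let f : ℝⁿ → ℝ be continuously differentiable on E_R with f(x) ≥ ε, |f(x) − 1| ≤ C‖x‖^(−τ) and ‖∇f(x)‖ ≤ C‖x‖^(−τ−1) on E_R. Let θ : ℝⁿ → ℝⁿ be continuous on E_R with ‖θ(x)‖ ≤ C‖x‖^(−τ−1) on E_R. Then the difference [ 𝔪_r(f·g) − 2(n−1)·∫_{S_r}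 ⟨θ(x) − ∇f(x)/(2 f(x)), ν(x)⟩ dσ(x) ] − [ 𝔪_r(g) − 2(n−1)·∫_{S_r} ⟨θ(x), ν(x)⟩ dσ(x) ] tends to 0 as r → ∞. -/
open MeasureTheory Filter Metric

open scoped NNReal ENNReal Pointwise

-- coordinate bound in Euclidean space
lemma abs_coord_le_norm {N : ℕ} (x : EuclideanSpace ℝ (Fin N)) (j : Fin N) : |x j| ≤ ‖x‖ := by
  have h := abs_real_inner_le_norm (EuclideanSpace.single j (1:ℝ)) x
  rw [EuclideanSpace.inner_single_left] at h
  simpa [EuclideanSpace.norm_single] using h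

-- the normalization map is Lipschitz on the outside of the unit ball
lemma lipschitz_normalize {E : Type*} [NormedAddCommGroup E] [NormedSpace ℝ E] :
    LipschitzOnWith 2 (fun x : E => ‖x‖⁻¹ • x) {x : E | 1 ≤ ‖x‖} := by
  rw [lipschitzOnWith_iff_dist_le_mul]
  intro x hx y hy
  simp only [Set.mem_setOf_eq] at hx hy
  have hx0 : (0:ℝ) < ‖x‖ := lt_of_lt_of_le one_pos hx
  have hy0 : (0:ℝ) < ‖y‖ := lt_of_lt_of_le one_pos hy
  rw [dist_eq_norm, dist_eq_norm]
  have key : ‖x‖⁻¹ • x - ‖y‖⁻¹ • y = ‖x‖⁻¹ • (x - y) + (‖x‖⁻¹ - ‖y‖⁻¹) • y := by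
    rw [smul_sub, sub_smul]; abel
  rw [key]
  have h1 : ‖‖x‖⁻¹ • (x - y)‖ ≤ ‖x - y‖ := by
    rw [norm_smul, norm_inv, norm_norm]
    calc ‖x‖⁻¹ * ‖x - y‖ ≤ 1 * ‖x - y‖ := by
          apply mul_le_mul_of_nonneg_right _ (norm_nonneg _)
          rw [inv_le_one_iff₀]; right; exact hx
      _ = ‖x - y‖ := one_mul _
  have h2 : ‖(‖x‖⁻¹ - ‖y‖⁻¹) • y‖ ≤ ‖x - y‖ := by
    rw [norm_smul, Real.norm_eq_abs]
    have heq : |‖x‖⁻¹ - ‖y‖⁻¹| * ‖y‖ = |‖y‖ - ‖x‖| / ‖x‖ := by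
      rw [show ‖x‖⁻¹ - ‖y‖⁻¹ = (‖y‖ - ‖x‖) / (‖x‖ * ‖y‖) by field_simp,
        abs_div, abs_mul, abs_of_pos hx0, abs_of_pos hy0]
      field_simp
    rw [heq]
    calc |‖y‖ - ‖x‖| / ‖x‖ ≤ |‖y‖ - ‖x‖| := div_le_self (abs_nonneg _) hx
      _ ≤ ‖y - x‖ := abs_norm_sub_norm_le y x
      _ = ‖x - y‖ := norm_sub_rev y x
  calc ‖‖x‖⁻¹ • (x - y) + (‖x‖⁻¹ - ‖y‖⁻¹) • y‖
      ≤ ‖‖x‖⁻¹ • (x - y)‖ + ‖(‖x‖⁻¹ - ‖y‖⁻¹) • y‖ := norm_add_le _ _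
    _ ≤ ‖x - y‖ + ‖x - y‖ := add_le_add h1 h2
    _ = 2 * ‖x - y‖ := by ring

lemma sphere_hausdorff_lt_top (m : ℕ) :
    μH[(m : ℝ)] (Metric.sphere (0 : EuclideanSpace ℝ (Fin (m+1))) 1) < ⊤ := by
  classical
  set E := EuclideanSpace ℝ (Fin (m+1)) with hE
  set π : E → E := fun x => ‖x‖⁻¹ • x with hπdef
  set φ : Fin (m+1) → ℝ → (Fin m → ℝ) → E :=
    fun k s y => (WithLp.equiv 2 (Fin (m+1) → ℝ)).symm (Fin.insertNth k s y) with hφdef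
  set Q : Set (Fin m → ℝ) := Metric.closedBall 0 1 with hQdef
  -- φ is Lipschitz
  have hφ : ∀ k s, LipschitzWith ((m:ℝ≥0)+1) (φ k s) := by
    intro k s
    apply LipschitzWith.of_dist_le_mul
    intro y z
    have hco : ∀ j, dist ((φ k s y) j) ((φ k s z) j) ≤ dist y z := by
      intro j
      rcases eq_or_ne j k with rfl | hjk
      · simpa [hφdef, Fin.insertNth_apply_same] using dist_nonneg (x := y) (y := z)
      · obtain ⟨i, rfl⟩ := Fin.exists_succAbove_eq hjk
        simpa [hφdef, Fin.insertNth_apply_succAbove] using dist_le_pi_dist y z i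
    rw [EuclideanSpace.dist_eq]
    have hsum : ∑ j, dist ((φ k s y) j) ((φ k s z) j) ^ 2
        ≤ ((m+1 : ℝ) * dist y z) ^ 2 := by
      calc ∑ j, dist ((φ k s y) j) ((φ k s z) j) ^ 2
          ≤ ∑ _j : Fin (m+1), dist y z ^ 2 := by
            apply Finset.sum_le_sum
            intro j _
            exact pow_le_pow_left₀ dist_nonneg (hco j) 2
        _ = (m+1 : ℝ) * dist y z ^ 2 := by
            simp [Finset.sum_const, Finset.card_univ, mul_comm]
        _ ≤ ((m+1 : ℝ) * dist y z) ^ 2 := by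
            rw [mul_pow]
            apply mul_le_mul_of_nonneg_right _ (sq_nonneg _)
            have h1 : (1:ℝ) ≤ (m+1 : ℝ) := by exact_mod_cast Nat.one_le_iff_ne_zero.mpr (Nat.succ_ne_zero m)
            nlinarith
    calc Real.sqrt (∑ j, dist ((φ k s y) j) ((φ k s z) j) ^ 2)
        ≤ Real.sqrt (((m+1 : ℝ) * dist y z) ^ 2) := Real.sqrt_le_sqrt hsum
      _ = (m+1 : ℝ) * dist y z := by
          rw [Real.sqrt_sq (by positivity)]
      _ = (((m:ℝ≥0)+1 : ℝ≥0) : ℝ) * dist y z := by push_cast; ring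
  -- each face maps into region outside unit ball
  have hmaps : ∀ (k : Fin (m+1)) (s : ℝ), |s| = 1 →
      Set.MapsTo (φ k s) Q {x : E | 1 ≤ ‖x‖} := by
    intro k s hs y _
    simp only [Set.mem_setOf_eq]
    calc (1:ℝ) = |s| := hs.symm
      _ = |(φ k s y) k| := by simp [hφdef, Fin.insertNth_apply_same]
      _ ≤ ‖φ k s y‖ := abs_coord_le_norm _ _
  -- covering
  have hcover : Metric.sphere (0 : E) 1 ⊆
      ⋃ k : Fin (m+1), ((π ∘ φ k 1) '' Q ∪ (π ∘ φ k (-1)) '' Q) := by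
    intro x hx
    have hx1 : ‖x‖ = 1 := by simpa using mem_sphere_zero_iff_norm.mp hx
    obtain ⟨k, -, hk⟩ := Finset.exists_max_image (Finset.univ : Finset (Fin (m+1)))
      (fun i => |x i|) ⟨⟨0, Nat.succ_pos m⟩, Finset.mem_univ _⟩
    have hk' : ∀ i, |x i| ≤ |x k| := fun i => hk i (Finset.mem_univ i)
    have hc : 0 < |x k| := by
      by_contra h
      push_neg at h
      have hzero : ∀ i, x i = 0 := by
        intro i
        have := (hk' i).trans h
        exact abs_nonpos_iff.mp ((hk' i).trans h)
      have : x = 0 := by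
        apply PiLp.ext
        intro i; exact hzero i
      rw [this, norm_zero] at hx1; norm_num at hx1
    set c : ℝ := |x k| with hcdef
    set v : Fin (m+1) → ℝ := fun j => c⁻¹ * x j with hvdef
    have habs : |c| = c := by rw [hcdef, abs_abs]
    have hvk : |v k| = 1 := by
      show |c⁻¹ * x k| = 1
      rw [abs_mul, abs_inv, habs, ← hcdef]
      exact inv_mul_cancel₀ hc.ne'
    have hyQ : Fin.removeNth k v ∈ Q := by
      rw [hQdef, Metric.mem_closedBall, dist_pi_le_iff zero_le_one]
      intro i
      rw [Real.dist_eq]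
      simp only [Fin.removeNth, Pi.zero_apply, sub_zero, hvdef, abs_mul, abs_inv, habs]
      calc c⁻¹ * |x (k.succAbove i)| ≤ c⁻¹ * c :=
            mul_le_mul_of_nonneg_left (hk' _) (inv_nonneg.mpr hc.le)
        _ = 1 := inv_mul_cancel₀ hc.ne'
    have hφv : φ k (v k) (Fin.removeNth k v) = (WithLp.equiv 2 (Fin (m+1) → ℝ)).symm v := by
      simp only [hφdef, Fin.insertNth_self_removeNth]
    have hveq : (WithLp.equiv 2 (Fin (m+1) → ℝ)).symm v = c⁻¹ • x := by
      apply PiLp.ext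
      intro j
      rfl
    have hπv : π ((WithLp.equiv 2 (Fin (m+1) → ℝ)).symm v) = x := by
      rw [hveq, hπdef]
      simp only [norm_smul, norm_inv, Real.norm_eq_abs, hx1, mul_one, inv_inv]
      rw [smul_smul, habs, mul_inv_cancel₀ hc.ne', one_smul]
    rcases (abs_eq zero_le_one).mp hvk with hs1 | hs1
    · refine Set.mem_iUnion.mpr ⟨k, Or.inl ?_⟩
      exact ⟨Fin.removeNth k v, hyQ, by rw [Function.comp_apply, ← hs1, hφv, hπv]⟩
    · refine Set.mem_iUnion.mpr ⟨k, Or.inr ?_⟩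
      exact ⟨Fin.removeNth k v, hyQ, by rw [Function.comp_apply, ← hs1, hφv, hπv]⟩
  -- measure bound
  have hm0 : (0:ℝ) ≤ (m:ℝ) := Nat.cast_nonneg m
  have hQfin : μH[(m:ℝ)] Q < ⊤ := by
    have hcard : ((Fintype.card (Fin m)):ℝ) = (m:ℝ) := by simp
    have : (μH[(m:ℝ)] : Measure (Fin m → ℝ)) = volume := by
      rw [← hcard]
      exact hausdorffMeasure_pi_real
    rw [this]
    exact (isCompact_closedBall 0 1).measure_lt_top
  have hpiece : ∀ (k : Fin (m+1)) (s : ℝ), |s| = 1 →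
      μH[(m:ℝ)] ((π ∘ φ k s) '' Q) < ⊤ := by
    intro k s hs
    have hlip : LipschitzOnWith (2 * ((m:ℝ≥0)+1)) (π ∘ φ k s) Q :=
      (lipschitz_normalize.comp ((hφ k s).lipschitzOnWith (s := Q)) (hmaps k s hs))
    calc μH[(m:ℝ)] ((π ∘ φ k s) '' Q)
        ≤ (((2 * ((m:ℝ≥0)+1)) : ℝ≥0∞)) ^ (m:ℝ) * μH[(m:ℝ)] Q :=
          hlip.hausdorffMeasure_image_le hm0
      _ < ⊤ := ENNReal.mul_lt_top
          (ENNReal.rpow_lt_top_of_nonneg hm0 ENNReal.coe_ne_top) hQfin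
  calc μH[(m:ℝ)] (Metric.sphere (0 : E) 1)
      ≤ μH[(m:ℝ)] (⋃ k : Fin (m+1), ((π ∘ φ k 1) '' Q ∪ (π ∘ φ k (-1)) '' Q)) :=
        measure_mono hcover
    _ ≤ ∑' k : Fin (m+1), μH[(m:ℝ)] ((π ∘ φ k 1) '' Q ∪ (π ∘ φ k (-1)) '' Q) :=
        measure_iUnion_le _
    _ < ⊤ := by
        rw [tsum_fintype]
        apply ENNReal.sum_lt_top.mpr
        intro k _
        calc μH[(m:ℝ)] ((π ∘ φ k 1) '' Q ∪ (π ∘ φ k (-1)) '' Q)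
            ≤ μH[(m:ℝ)] ((π ∘ φ k 1) '' Q) + μH[(m:ℝ)] ((π ∘ φ k (-1)) '' Q) :=
              measure_union_le _ _
          _ < ⊤ := ENNReal.add_lt_top.mpr
              ⟨hpiece k 1 (by norm_num), hpiece k (-1) (by norm_num)⟩

lemma sphere_hausdorff_scale (m : ℕ) {r : ℝ} (hr : 0 < r) :
    μH[(m:ℝ)] (Metric.sphere (0 : EuclideanSpace ℝ (Fin (m+1))) r)
      = (ENNReal.ofReal r) ^ (m:ℝ) *
        μH[(m:ℝ)] (Metric.sphere (0 : EuclideanSpace ℝ (Fin (m+1))) 1) := by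
  have hset : Metric.sphere (0 : EuclideanSpace ℝ (Fin (m+1))) r
      = r • Metric.sphere (0 : EuclideanSpace ℝ (Fin (m+1))) 1 := by
    ext x
    simp only [mem_sphere_zero_iff_norm, Set.mem_smul_set]
    constructor
    · intro hx
      refine ⟨r⁻¹ • x, ?_, ?_⟩
      · rw [norm_smul, norm_inv, Real.norm_eq_abs,
          abs_of_pos hr, hx, inv_mul_cancel₀ hr.ne']
      · rw [smul_smul, mul_inv_cancel₀ hr.ne', one_smul]
    · rintro ⟨u, hu, rfl⟩
      rw [norm_smul, Real.norm_eq_abs, abs_of_pos hr, hu, mul_one]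
  rw [hset, MeasureTheory.Measure.hausdorffMeasure_smul₀ (Nat.cast_nonneg m) hr.ne'
    (Metric.sphere 0 1)]
  rw [ENNReal.smul_def, smul_eq_mul]
  congr 1
  rw [ENNReal.coe_rpow_of_nonneg _ (Nat.cast_nonneg m)]
  congr 1
  rw [Real.nnnorm_of_nonneg hr.le, ENNReal.ofReal]
  congr 1
  exact (Real.toNNReal_of_nonneg hr.le).symm

lemma integrableOn_sphere_of_continuousOn {N : ℕ} {d : ℝ} {h : EuclideanSpace ℝ (Fin N) → ℝ}
    {r : ℝ} (hfin : μH[d] (Metric.sphere (0 : EuclideanSpace ℝ (Fin N)) r) < ⊤)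
    (hc : ContinuousOn h (Metric.sphere (0 : EuclideanSpace ℝ (Fin N)) r)) :
    MeasureTheory.IntegrableOn h (Metric.sphere (0 : EuclideanSpace ℝ (Fin N)) r) μH[d] := by
  obtain ⟨B, hB⟩ :=
    (isCompact_sphere (0 : EuclideanSpace ℝ (Fin N)) r).exists_bound_of_continuousOn hc
  refine ⟨hc.aestronglyMeasurable (Metric.isClosed_sphere.measurableSet), ?_⟩
  apply MeasureTheory.HasFiniteIntegral.restrict_of_bounded hfin (C := B)
  filter_upwards [MeasureTheory.ae_restrict_mem Metric.isClosed_sphere.measurableSet] with x hx using hB x hx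

set_option maxHeartbeats 2000000 in
/-- coordinate computation behind Proposition 20: conformal
invariance of the mass of an asymptotically flat Weyl structure. With
`g = δ + a` asymptotically flat of order `τ > (n-2)/2`, `f` asymptotic to `1`
and bounded below by `ε > 0`, and a Lee form `θ = O(‖x‖^(-τ-1))`, the
difference of the two mass boundary terms
`[𝔪_r(f·g) - 2(n-1)∫_{S_r}⟨θ - ∇f/(2f), ν⟩] - [𝔪_r(g) - 2(n-1)∫_{S_r}⟨θ, ν⟩]`
tends to `0` as `r → ∞`. -/
theorem weyl_mass_conformal_invariance (n : ℕ) (hn : 3 ≤ n) (R C ε τ : ℝ)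
    (hR : 0 < R) (hC : 0 ≤ C) (hε : 0 < ε) (hτ : ((n : ℝ) - 2) / 2 < τ)
    (a : EuclideanSpace ℝ (Fin n) → Matrix (Fin n) (Fin n) ℝ)
    (ha_diff : ∀ (i j : Fin n) (x : EuclideanSpace ℝ (Fin n)), R ≤ ‖x‖ →
      DifferentiableAt ℝ (fun y => a y i j) x)
    (ha_C1 : ∀ i j : Fin n, ContinuousOn (fun x => fderiv ℝ (fun y => a y i j) x)
      {x : EuclideanSpace ℝ (Fin n) | R ≤ ‖x‖})
    (ha_bound : ∀ (i j : Fin n) (x : EuclideanSpace ℝ (Fin n)), R ≤ ‖x‖ →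
      |a x i j| ≤ C * ‖x‖ ^ (-τ))
    (ha_deriv : ∀ (i j k : Fin n) (x : EuclideanSpace ℝ (Fin n)), R ≤ ‖x‖ →
      |fderiv ℝ (fun y => a y i j) x (EuclideanSpace.single k 1)| ≤ C * ‖x‖ ^ (-τ - 1))
    (f : EuclideanSpace ℝ (Fin n) → ℝ)
    (hf_diff : ∀ x : EuclideanSpace ℝ (Fin n), R ≤ ‖x‖ → DifferentiableAt ℝ f x)
    (hf_C1 : ContinuousOn (fun x => fderiv ℝ f x) {x : EuclideanSpace ℝ (Fin n) | R ≤ ‖x‖})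
    (hf_low : ∀ x : EuclideanSpace ℝ (Fin n), R ≤ ‖x‖ → ε ≤ f x)
    (hf_one : ∀ x : EuclideanSpace ℝ (Fin n), R ≤ ‖x‖ → |f x - 1| ≤ C * ‖x‖ ^ (-τ))
    (hf_grad : ∀ x : EuclideanSpace ℝ (Fin n), R ≤ ‖x‖ →
      ‖gradient f x‖ ≤ C * ‖x‖ ^ (-τ - 1))
    (θ : EuclideanSpace ℝ (Fin n) → EuclideanSpace ℝ (Fin n))
    (hθ_cont : ContinuousOn θ {x : EuclideanSpace ℝ (Fin n) | R ≤ ‖x‖})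
    (hθ_bound : ∀ x : EuclideanSpace ℝ (Fin n), R ≤ ‖x‖ → ‖θ x‖ ≤ C * ‖x‖ ^ (-τ - 1)) :
    Tendsto
      (fun r : ℝ =>
        (massSurfaceIntegral n (fun x => f x • ((1 : Matrix (Fin n) (Fin n) ℝ) + a x)) r -
          2 * ((n : ℝ) - 1) *
            ∫ x in Metric.sphere (0 : EuclideanSpace ℝ (Fin n)) r,
              (inner ℝ (θ x - (1 / (2 * f x)) • gradient f x) (‖x‖⁻¹ • x) : ℝ)
              ∂(μH[(n : ℝ) - 1])) -
        (massSurfaceIntegral n (fun x => (1 : Matrix (Fin n) (Fin n) ℝ) + a x) r -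
          2 * ((n : ℝ) - 1) *
            ∫ x in Metric.sphere (0 : EuclideanSpace ℝ (Fin n)) r,
              (inner ℝ (θ x) (‖x‖⁻¹ • x) : ℝ) ∂(μH[(n : ℝ) - 1])))
      atTop (nhds 0) := by
  obtain ⟨m, rfl⟩ : ∃ m, n = m + 1 := ⟨n - 1, by omega⟩
  have hexp : ((m + 1 : ℕ) : ℝ) - 1 = (m : ℝ) := by push_cast; ring
  have hm0 : (0:ℝ) ≤ (m:ℝ) := Nat.cast_nonneg m
  set K : ℝ := C ^ 2 * (4 * ((m:ℝ) + 1) ^ 2 + ((m:ℝ) + 1) / ε) with hK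
  have hK0 : 0 ≤ K := by positivity
  set M : ℝ := (μH[(m:ℝ)] (Metric.sphere (0 : EuclideanSpace ℝ (Fin (m+1))) 1)).toReal with hM
  have hM0 : 0 ≤ M := ENNReal.toReal_nonneg
  have hy : (0:ℝ) < 2 * τ + 1 - (m:ℝ) := by
    have : ((m:ℝ) + 1 - 2) / 2 < τ := by
      have := hτ; push_cast at this ⊢; linarith
    linarith
  simp only [massSurfaceIntegral, hexp]
  -- Abbreviations for the four integrands
  set F1 : EuclideanSpace ℝ (Fin (m+1)) → ℝ := fun x =>
    ∑ i : Fin (m+1), ∑ j : Fin (m+1),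
      ((fderiv ℝ (fun y => (f y • ((1 : Matrix (Fin (m+1)) (Fin (m+1)) ℝ) + a y)) i j) x)
          (EuclideanSpace.single i 1) -
        (fderiv ℝ (fun y => (f y • ((1 : Matrix (Fin (m+1)) (Fin (m+1)) ℝ) + a y)) i i) x)
          (EuclideanSpace.single j 1)) * (x j / ‖x‖) with hF1def
  set F0 : EuclideanSpace ℝ (Fin (m+1)) → ℝ := fun x =>
    ∑ i : Fin (m+1), ∑ j : Fin (m+1),
      ((fderiv ℝ (fun y => ((1 : Matrix (Fin (m+1)) (Fin (m+1)) ℝ) + a y) i j) x)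
          (EuclideanSpace.single i 1) -
        (fderiv ℝ (fun y => ((1 : Matrix (Fin (m+1)) (Fin (m+1)) ℝ) + a y) i i) x)
          (EuclideanSpace.single j 1)) * (x j / ‖x‖) with hF0def
  set Pf : EuclideanSpace ℝ (Fin (m+1)) → ℝ := fun x =>
    (inner ℝ (θ x - (1 / (2 * f x)) • gradient f x) (‖x‖⁻¹ • x) : ℝ) with hPdef
  set Qf : EuclideanSpace ℝ (Fin (m+1)) → ℝ := fun x =>
    (inner ℝ (θ x) (‖x‖⁻¹ • x) : ℝ) with hQdef
  set S2 : EuclideanSpace ℝ (Fin (m+1)) → ℝ := fun x =>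
    ∑ i : Fin (m+1), ∑ j : Fin (m+1),
      (a x i j * fderiv ℝ f x (EuclideanSpace.single i 1) -
        a x i i * fderiv ℝ f x (EuclideanSpace.single j 1)) * (x j / ‖x‖) with hS2def
  -- gradient/inner basics
  have hgradf : ∀ (x v : EuclideanSpace ℝ (Fin (m+1))),
      (inner ℝ (gradient f x) v : ℝ) = fderiv ℝ f x v := fun x v =>
    InnerProductSpace.toDual_symm_apply
  have hsumx : ∀ (x : EuclideanSpace ℝ (Fin (m+1))) (L : EuclideanSpace ℝ (Fin (m+1)) →L[ℝ] ℝ),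
      ∑ j : Fin (m+1), L (EuclideanSpace.single j 1) * x j = L x := by
    intro x L
    conv_rhs => rw [← OrthonormalBasis.sum_repr (EuclideanSpace.basisFun (Fin (m+1)) ℝ) x]
    rw [map_sum]
    refine Finset.sum_congr rfl fun j _ => ?_
    rw [EuclideanSpace.basisFun_repr, EuclideanSpace.basisFun_apply, ContinuousLinearMap.map_smul]
    simp [mul_comm]
  -- derivative formulas on the exterior region
  have hg0d : ∀ (i j : Fin (m+1)) (x : EuclideanSpace ℝ (Fin (m+1))),
      fderiv ℝ (fun y => ((1 : Matrix (Fin (m+1)) (Fin (m+1)) ℝ) + a y) i j) x =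
        fderiv ℝ (fun y => a y i j) x := by
    intro i j x
    have h1 : (fun y => ((1 : Matrix (Fin (m+1)) (Fin (m+1)) ℝ) + a y) i j) =
        fun y => (1 : Matrix (Fin (m+1)) (Fin (m+1)) ℝ) i j + a y i j := by
      funext y; rw [Matrix.add_apply]
    rw [h1, fderiv_const_add]
  have hg1d : ∀ (i j : Fin (m+1)) (x : EuclideanSpace ℝ (Fin (m+1))), R ≤ ‖x‖ →
      fderiv ℝ (fun y => (f y • ((1 : Matrix (Fin (m+1)) (Fin (m+1)) ℝ) + a y)) i j) x =
        f x • fderiv ℝ (fun y => a y i j) x +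
          ((1 : Matrix (Fin (m+1)) (Fin (m+1)) ℝ) i j + a x i j) • fderiv ℝ f x := by
    intro i j x hx
    have h1 : (fun y => (f y • ((1 : Matrix (Fin (m+1)) (Fin (m+1)) ℝ) + a y)) i j) =
        fun y => f y * ((1 : Matrix (Fin (m+1)) (Fin (m+1)) ℝ) i j + a y i j) := by
      funext y; rw [Matrix.smul_apply, Matrix.add_apply, smul_eq_mul]
    rw [h1, fderiv_fun_mul (hf_diff x hx) ((differentiableAt_const _).fun_add (ha_diff i j x hx)),
      fderiv_const_add]
  -- the exact pointwise identity
  have hiden : ∀ (x : EuclideanSpace ℝ (Fin (m+1))), R ≤ ‖x‖ →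
      (F1 x - 2 * (m:ℝ) * Pf x) - (F0 x - 2 * (m:ℝ) * Qf x) =
        (f x - 1) * F0 x + S2 x +
          (m:ℝ) * (1 / f x - 1) * (fderiv ℝ f x x / ‖x‖) := by
    intro x hx
    have hx0 : (0:ℝ) < ‖x‖ := lt_of_lt_of_le hR hx
    have hfx : (0:ℝ) < f x := lt_of_lt_of_le hε (hf_low x hx)
    have hF0x : F0 x = ∑ i : Fin (m+1), ∑ j : Fin (m+1),
        ((fderiv ℝ (fun y => a y i j) x) (EuclideanSpace.single i 1) -
          (fderiv ℝ (fun y => a y i i) x) (EuclideanSpace.single j 1)) * (x j / ‖x‖) := by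
      rw [hF0def]
      exact Finset.sum_congr rfl fun i _ => Finset.sum_congr rfl fun j _ => by
        rw [hg0d i j x, hg0d i i x]
    have hT : ∑ j : Fin (m+1), fderiv ℝ f x (EuclideanSpace.single j 1) * (x j / ‖x‖) =
        fderiv ℝ f x x / ‖x‖ := by
      rw [← hsumx x (fderiv ℝ f x), Finset.sum_div]
      exact Finset.sum_congr rfl fun j _ => by rw [mul_div_assoc]
    have hsplit : F1 x = F0 x + ((f x - 1) * F0 x + (S2 x +
        ((∑ i : Fin (m+1), fderiv ℝ f x (EuclideanSpace.single i 1) * (x i / ‖x‖)) -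
          ((m:ℝ) + 1) * ∑ j : Fin (m+1), fderiv ℝ f x (EuclideanSpace.single j 1) * (x j / ‖x‖)))) := by
      rw [hF1def]
      calc (∑ i : Fin (m+1), ∑ j : Fin (m+1),
          ((fderiv ℝ (fun y => (f y • ((1 : Matrix (Fin (m+1)) (Fin (m+1)) ℝ) + a y)) i j) x)
              (EuclideanSpace.single i 1) -
            (fderiv ℝ (fun y => (f y • ((1 : Matrix (Fin (m+1)) (Fin (m+1)) ℝ) + a y)) i i) x)
              (EuclideanSpace.single j 1)) * (x j / ‖x‖))
          = ∑ i : Fin (m+1), ∑ j : Fin (m+1),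
            (((fderiv ℝ (fun y => a y i j) x) (EuclideanSpace.single i 1) -
              (fderiv ℝ (fun y => a y i i) x) (EuclideanSpace.single j 1)) * (x j / ‖x‖) +
            ((f x - 1) * (((fderiv ℝ (fun y => a y i j) x) (EuclideanSpace.single i 1) -
              (fderiv ℝ (fun y => a y i i) x) (EuclideanSpace.single j 1)) * (x j / ‖x‖)) +
            ((a x i j * fderiv ℝ f x (EuclideanSpace.single i 1) -
              a x i i * fderiv ℝ f x (EuclideanSpace.single j 1)) * (x j / ‖x‖) +
            ((if i = j then (1:ℝ) else 0) *
              (fderiv ℝ f x (EuclideanSpace.single i 1) * (x j / ‖x‖)) -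
              fderiv ℝ f x (EuclideanSpace.single j 1) * (x j / ‖x‖))))) := by
            refine Finset.sum_congr rfl fun i _ => Finset.sum_congr rfl fun j _ => ?_
            rw [hg1d i j x hx, hg1d i i x hx]
            simp only [ContinuousLinearMap.add_apply, ContinuousLinearMap.coe_smul',
              Pi.smul_apply, smul_eq_mul, Matrix.one_apply]
            rcases eq_or_ne i j with rfl | hij
            · simp only [eq_self_iff_true, if_true]; ring
            · simp only [eq_self_iff_true, if_true, if_neg hij]; ring
        _ = F0 x + ((f x - 1) * F0 x + (S2 x +
            ((∑ i : Fin (m+1), fderiv ℝ f x (EuclideanSpace.single i 1) * (x i / ‖x‖)) -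
              ((m:ℝ) + 1) * ∑ j : Fin (m+1), fderiv ℝ f x (EuclideanSpace.single j 1) * (x j / ‖x‖)))) := by
            simp only [Finset.sum_add_distrib, Finset.sum_sub_distrib, ← Finset.mul_sum,
              ite_mul, one_mul, zero_mul, Finset.sum_ite_eq, Finset.mem_univ, if_pos,
              Finset.sum_const, Finset.card_univ, Fintype.card_fin, nsmul_eq_mul]
            rw [hF0x, hS2def]
            push_cast
            ring
    have hPQ : Qf x - Pf x = (1 / (2 * f x)) * (fderiv ℝ f x x / ‖x‖) := by
      rw [hPdef, hQdef]
      simp only [inner_sub_left]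
      rw [real_inner_smul_left, hgradf, ContinuousLinearMap.map_smul, smul_eq_mul]
      ring
    have h2f : (2:ℝ) * f x ≠ 0 := by positivity
    have hfne : f x ≠ 0 := ne_of_gt hfx
    calc (F1 x - 2 * (m:ℝ) * Pf x) - (F0 x - 2 * (m:ℝ) * Qf x)
        = (F1 x - F0 x) + 2 * (m:ℝ) * (Qf x - Pf x) := by ring
      _ = (f x - 1) * F0 x + S2 x + (m:ℝ) * (1 / f x - 1) * (fderiv ℝ f x x / ‖x‖) := by
          rw [hsplit, hPQ, hT]
          field_simp
          ring
  have hF0ex : ∀ (x : EuclideanSpace ℝ (Fin (m+1))), F0 x =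
      ∑ i : Fin (m+1), ∑ j : Fin (m+1),
        ((fderiv ℝ (fun y => a y i j) x) (EuclideanSpace.single i 1) -
          (fderiv ℝ (fun y => a y i i) x) (EuclideanSpace.single j 1)) * (x j / ‖x‖) := by
    intro x
    rw [hF0def]
    exact Finset.sum_congr rfl fun i _ => Finset.sum_congr rfl fun j _ => by
      rw [hg0d i j x, hg0d i i x]
  have hnu : ∀ (x : EuclideanSpace ℝ (Fin (m+1))) (j : Fin (m+1)), 0 < ‖x‖ →
      |x j / ‖x‖| ≤ 1 := by
    intro x j hx0
    rw [abs_div, abs_norm, div_le_one hx0]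
    exact abs_coord_le_norm x j
  have hFi : ∀ (x : EuclideanSpace ℝ (Fin (m+1))), R ≤ ‖x‖ → ∀ i : Fin (m+1),
      |fderiv ℝ f x (EuclideanSpace.single i 1)| ≤ C * ‖x‖ ^ (-τ - 1) := by
    intro x hx i
    rw [← hgradf]
    calc |(inner ℝ (gradient f x) (EuclideanSpace.single i (1:ℝ)) : ℝ)|
        ≤ ‖gradient f x‖ * ‖EuclideanSpace.single i (1:ℝ)‖ := abs_real_inner_le_norm _ _
      _ = ‖gradient f x‖ := by rw [EuclideanSpace.norm_single]; simp
      _ ≤ C * ‖x‖ ^ (-τ - 1) := hf_grad x hx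
  have hL : ∀ (x : EuclideanSpace ℝ (Fin (m+1))), R ≤ ‖x‖ →
      |fderiv ℝ f x x / ‖x‖| ≤ C * ‖x‖ ^ (-τ - 1) := by
    intro x hx
    have hx0 : (0:ℝ) < ‖x‖ := lt_of_lt_of_le hR hx
    rw [abs_div, abs_norm, div_le_iff₀ hx0]
    rw [← hgradf]
    calc |(inner ℝ (gradient f x) x : ℝ)| ≤ ‖gradient f x‖ * ‖x‖ := abs_real_inner_le_norm _ _
      _ ≤ (C * ‖x‖ ^ (-τ - 1)) * ‖x‖ :=
          mul_le_mul_of_nonneg_right (hf_grad x hx) (norm_nonneg x)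
  have hF0b : ∀ (x : EuclideanSpace ℝ (Fin (m+1))), R ≤ ‖x‖ →
      |F0 x| ≤ ((m:ℝ)+1)^2 * (2 * (C * ‖x‖ ^ (-τ - 1))) := by
    intro x hx
    have hx0 : (0:ℝ) < ‖x‖ := lt_of_lt_of_le hR hx
    rw [hF0ex x]
    calc |∑ i : Fin (m+1), ∑ j : Fin (m+1),
        ((fderiv ℝ (fun y => a y i j) x) (EuclideanSpace.single i 1) -
          (fderiv ℝ (fun y => a y i i) x) (EuclideanSpace.single j 1)) * (x j / ‖x‖)|
        ≤ ∑ i : Fin (m+1), ∑ j : Fin (m+1),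
          |((fderiv ℝ (fun y => a y i j) x) (EuclideanSpace.single i 1) -
            (fderiv ℝ (fun y => a y i i) x) (EuclideanSpace.single j 1)) * (x j / ‖x‖)| :=
          (Finset.abs_sum_le_sum_abs _ _).trans (Finset.sum_le_sum fun i _ =>
            Finset.abs_sum_le_sum_abs _ _)
      _ ≤ ∑ _i : Fin (m+1), ∑ _j : Fin (m+1), 2 * (C * ‖x‖ ^ (-τ - 1)) := by
          refine Finset.sum_le_sum fun i _ => Finset.sum_le_sum fun j _ => ?_
          rw [abs_mul]
          calc |(fderiv ℝ (fun y => a y i j) x) (EuclideanSpace.single i 1) -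
              (fderiv ℝ (fun y => a y i i) x) (EuclideanSpace.single j 1)| * |x j / ‖x‖|
              ≤ (C * ‖x‖ ^ (-τ - 1) + C * ‖x‖ ^ (-τ - 1)) * 1 := by
                apply mul_le_mul _ (hnu x j hx0) (abs_nonneg _) (by positivity)
                exact (abs_sub _ _).trans (add_le_add (ha_deriv i j i x hx) (ha_deriv i i j x hx))
            _ = 2 * (C * ‖x‖ ^ (-τ - 1)) := by ring
      _ = ((m:ℝ)+1)^2 * (2 * (C * ‖x‖ ^ (-τ - 1))) := by
          simp [Finset.sum_const, Finset.card_univ]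
          push_cast
          ring
  have hS2b : ∀ (x : EuclideanSpace ℝ (Fin (m+1))), R ≤ ‖x‖ →
      |S2 x| ≤ ((m:ℝ)+1)^2 * (2 * ((C * ‖x‖ ^ (-τ)) * (C * ‖x‖ ^ (-τ - 1)))) := by
    intro x hx
    have hx0 : (0:ℝ) < ‖x‖ := lt_of_lt_of_le hR hx
    rw [hS2def]
    calc |∑ i : Fin (m+1), ∑ j : Fin (m+1),
        (a x i j * fderiv ℝ f x (EuclideanSpace.single i 1) -
          a x i i * fderiv ℝ f x (EuclideanSpace.single j 1)) * (x j / ‖x‖)|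
        ≤ ∑ i : Fin (m+1), ∑ j : Fin (m+1),
          |(a x i j * fderiv ℝ f x (EuclideanSpace.single i 1) -
            a x i i * fderiv ℝ f x (EuclideanSpace.single j 1)) * (x j / ‖x‖)| :=
          (Finset.abs_sum_le_sum_abs _ _).trans (Finset.sum_le_sum fun i _ =>
            Finset.abs_sum_le_sum_abs _ _)
      _ ≤ ∑ _i : Fin (m+1), ∑ _j : Fin (m+1), 2 * ((C * ‖x‖ ^ (-τ)) * (C * ‖x‖ ^ (-τ - 1))) := by
          refine Finset.sum_le_sum fun i _ => Finset.sum_le_sum fun j _ => ?_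
          rw [abs_mul]
          have h1 : |a x i j * fderiv ℝ f x (EuclideanSpace.single i 1) -
              a x i i * fderiv ℝ f x (EuclideanSpace.single j 1)|
              ≤ (C * ‖x‖ ^ (-τ)) * (C * ‖x‖ ^ (-τ - 1)) +
                (C * ‖x‖ ^ (-τ)) * (C * ‖x‖ ^ (-τ - 1)) := by
            refine (abs_sub _ _).trans (add_le_add ?_ ?_) <;>
              · rw [abs_mul]
                exact mul_le_mul (ha_bound _ _ x hx) (hFi x hx _) (abs_nonneg _) (by positivity)
          calc _ ≤ ((C * ‖x‖ ^ (-τ)) * (C * ‖x‖ ^ (-τ - 1)) +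
                (C * ‖x‖ ^ (-τ)) * (C * ‖x‖ ^ (-τ - 1))) * 1 :=
                mul_le_mul h1 (hnu x j hx0) (abs_nonneg _) (by positivity)
            _ = 2 * ((C * ‖x‖ ^ (-τ)) * (C * ‖x‖ ^ (-τ - 1))) := by ring
      _ = ((m:ℝ)+1)^2 * (2 * ((C * ‖x‖ ^ (-τ)) * (C * ‖x‖ ^ (-τ - 1)))) := by
          simp [Finset.sum_const, Finset.card_univ]
          push_cast
          ring
  have hinvf : ∀ (x : EuclideanSpace ℝ (Fin (m+1))), R ≤ ‖x‖ →
      |1 / f x - 1| ≤ (C * ‖x‖ ^ (-τ)) / ε := by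
    intro x hx
    have hfx : (0:ℝ) < f x := lt_of_lt_of_le hε (hf_low x hx)
    have heq : 1 / f x - 1 = (1 - f x) / f x := by field_simp
    rw [heq, abs_div, abs_of_pos hfx]
    apply div_le_div₀ (by positivity) _ hε (hf_low x hx)
    rw [abs_sub_comm]
    exact hf_one x hx
  have hDb : ∀ (x : EuclideanSpace ℝ (Fin (m+1))), R ≤ ‖x‖ →
      |(F1 x - 2 * (m:ℝ) * Pf x) - (F0 x - 2 * (m:ℝ) * Qf x)| ≤ K * ‖x‖ ^ (-2*τ - 1) := by
    intro x hx
    have hx0 : (0:ℝ) < ‖x‖ := lt_of_lt_of_le hR hx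
    have hpow : ‖x‖ ^ (-τ) * ‖x‖ ^ (-τ - 1) = ‖x‖ ^ (-2*τ - 1) := by
      rw [← Real.rpow_add hx0]
      ring_nf
    have hu : (0:ℝ) ≤ ‖x‖ ^ (-τ) := Real.rpow_nonneg (norm_nonneg x) _
    have hv : (0:ℝ) ≤ ‖x‖ ^ (-τ - 1) := Real.rpow_nonneg (norm_nonneg x) _
    rw [hiden x hx]
    have h1 : |(f x - 1) * F0 x| ≤ (C * ‖x‖ ^ (-τ)) * (((m:ℝ)+1)^2 * (2 * (C * ‖x‖ ^ (-τ - 1)))) := by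
      rw [abs_mul]
      exact mul_le_mul (hf_one x hx) (hF0b x hx) (abs_nonneg _) (by positivity)
    have h3 : |(m:ℝ) * (1 / f x - 1) * (fderiv ℝ f x x / ‖x‖)|
        ≤ (m:ℝ) * ((C * ‖x‖ ^ (-τ)) / ε) * (C * ‖x‖ ^ (-τ - 1)) := by
      rw [abs_mul, abs_mul, Nat.abs_cast]
      exact mul_le_mul (mul_le_mul_of_nonneg_left (hinvf x hx) hm0) (hL x hx)
        (abs_nonneg _) (by positivity)
    calc |(f x - 1) * F0 x + S2 x + (m:ℝ) * (1 / f x - 1) * (fderiv ℝ f x x / ‖x‖)|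
        ≤ |(f x - 1) * F0 x| + |S2 x| + |(m:ℝ) * (1 / f x - 1) * (fderiv ℝ f x x / ‖x‖)| :=
          (abs_add_le _ _).trans (add_le_add_left (abs_add_le _ _) _)
      _ ≤ (C * ‖x‖ ^ (-τ)) * (((m:ℝ)+1)^2 * (2 * (C * ‖x‖ ^ (-τ - 1)))) +
          ((m:ℝ)+1)^2 * (2 * ((C * ‖x‖ ^ (-τ)) * (C * ‖x‖ ^ (-τ - 1)))) +
          (m:ℝ) * ((C * ‖x‖ ^ (-τ)) / ε) * (C * ‖x‖ ^ (-τ - 1)) :=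
          add_le_add (add_le_add h1 (hS2b x hx)) h3
      _ = (C ^ 2 * (4 * ((m:ℝ) + 1) ^ 2 + (m:ℝ) / ε)) * (‖x‖ ^ (-τ) * ‖x‖ ^ (-τ - 1)) := by
          field_simp
          ring
      _ ≤ K * (‖x‖ ^ (-τ) * ‖x‖ ^ (-τ - 1)) := by
          apply mul_le_mul_of_nonneg_right _ (by positivity)
          rw [hK]
          gcongr
          · linarith
      _ = K * ‖x‖ ^ (-2*τ - 1) := by rw [hpow]
  -- continuity facts
  have hne : ∀ x ∈ {x : EuclideanSpace ℝ (Fin (m+1)) | R ≤ ‖x‖}, ‖x‖ ≠ 0 :=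
    fun x hx => ne_of_gt (lt_of_lt_of_le hR hx)
  have hca : ∀ i j : Fin (m+1), ContinuousOn (fun x => a x i j)
      {x : EuclideanSpace ℝ (Fin (m+1)) | R ≤ ‖x‖} :=
    fun i j x hx => ((ha_diff i j x hx).continuousAt).continuousWithinAt
  have hcf : ContinuousOn f {x : EuclideanSpace ℝ (Fin (m+1)) | R ≤ ‖x‖} :=
    fun x hx => ((hf_diff x hx).continuousAt).continuousWithinAt
  have hcgrad : ContinuousOn (gradient f) {x : EuclideanSpace ℝ (Fin (m+1)) | R ≤ ‖x‖} := by
    have h1 : gradient f = fun x =>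
        (InnerProductSpace.toDual ℝ (EuclideanSpace ℝ (Fin (m+1)))).symm (fderiv ℝ f x) := rfl
    rw [h1]
    exact (InnerProductSpace.toDual ℝ _).symm.continuous.comp_continuousOn hf_C1
  have hccoord : ∀ j : Fin (m+1), Continuous (fun x : EuclideanSpace ℝ (Fin (m+1)) => x j) := by
    intro j
    have h := Continuous.inner (𝕜 := ℝ)
      (continuous_const  : Continuous fun _ : EuclideanSpace ℝ (Fin (m+1)) =>
        EuclideanSpace.single j (1:ℝ))
      (continuous_id : Continuous fun x : EuclideanSpace ℝ (Fin (m+1)) => x)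
    simpa [EuclideanSpace.inner_single_left] using h
  have hcnu : ContinuousOn (fun x : EuclideanSpace ℝ (Fin (m+1)) => ‖x‖⁻¹ • x)
      {x : EuclideanSpace ℝ (Fin (m+1)) | R ≤ ‖x‖} :=
    (continuous_norm.continuousOn.inv₀ hne).smul continuousOn_id
  have hcnuj : ∀ j : Fin (m+1), ContinuousOn (fun x : EuclideanSpace ℝ (Fin (m+1)) => x j / ‖x‖)
      {x : EuclideanSpace ℝ (Fin (m+1)) | R ≤ ‖x‖} :=
    fun j => ((hccoord j).continuousOn).div continuous_norm.continuousOn hne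
  have hcd1 : ∀ i j k : Fin (m+1), ContinuousOn (fun x =>
      (fderiv ℝ (fun y => (f y • ((1 : Matrix (Fin (m+1)) (Fin (m+1)) ℝ) + a y)) i j) x)
        (EuclideanSpace.single k 1)) {x : EuclideanSpace ℝ (Fin (m+1)) | R ≤ ‖x‖} := by
    intro i j k
    refine ContinuousOn.congr
      (f := fun x => f x * (fderiv ℝ (fun y => a y i j) x) (EuclideanSpace.single k 1) +
        ((1 : Matrix (Fin (m+1)) (Fin (m+1)) ℝ) i j + a x i j) *
          (fderiv ℝ f x) (EuclideanSpace.single k 1))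
      ((hcf.mul ((ha_C1 i j).clm_apply continuousOn_const)).add
        ((continuousOn_const.add (hca i j)).mul (hf_C1.clm_apply continuousOn_const)))
      fun x hx => ?_
    rw [hg1d i j x hx]
    simp [ContinuousLinearMap.add_apply, ContinuousLinearMap.coe_smul', Pi.smul_apply,
      smul_eq_mul]
  have hcd0 : ∀ i j k : Fin (m+1), ContinuousOn (fun x =>
      (fderiv ℝ (fun y => ((1 : Matrix (Fin (m+1)) (Fin (m+1)) ℝ) + a y) i j) x)
        (EuclideanSpace.single k 1)) {x : EuclideanSpace ℝ (Fin (m+1)) | R ≤ ‖x‖} := by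
    intro i j k
    refine ContinuousOn.congr
      (f := fun x => (fderiv ℝ (fun y => a y i j) x) (EuclideanSpace.single k 1))
      ((ha_C1 i j).clm_apply continuousOn_const) fun x hx => ?_
    rw [hg0d i j x]
  have hcF1 : ContinuousOn F1 {x : EuclideanSpace ℝ (Fin (m+1)) | R ≤ ‖x‖} := by
    rw [hF1def]
    exact continuousOn_finset_sum _ fun i _ => continuousOn_finset_sum _ fun j _ =>
      ((hcd1 i j i).sub (hcd1 i i j)).mul (hcnuj j)
  have hcF0 : ContinuousOn F0 {x : EuclideanSpace ℝ (Fin (m+1)) | R ≤ ‖x‖} := by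
    rw [hF0def]
    exact continuousOn_finset_sum _ fun i _ => continuousOn_finset_sum _ fun j _ =>
      ((hcd0 i j i).sub (hcd0 i i j)).mul (hcnuj j)
  have hcP : ContinuousOn Pf {x : EuclideanSpace ℝ (Fin (m+1)) | R ≤ ‖x‖} := by
    rw [hPdef]
    refine ContinuousOn.inner (hθ_cont.sub (ContinuousOn.fun_smul ?_ hcgrad)) hcnu
    refine continuousOn_const.div (continuousOn_const.mul hcf) fun x hx => ?_
    have : (0:ℝ) < f x := lt_of_lt_of_le hε (hf_low x hx)
    positivity
  have hcQ : ContinuousOn Qf {x : EuclideanSpace ℝ (Fin (m+1)) | R ≤ ‖x‖} := by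
    rw [hQdef]
    exact ContinuousOn.inner hθ_cont hcnu
  apply squeeze_zero_norm' (a := fun r : ℝ => (K * M) * r ^ ((m:ℝ) - 2 * τ - 1))
  · filter_upwards [eventually_ge_atTop (max R 1)] with r hr
    have hrR : R ≤ r := le_trans (le_max_left _ _) hr
    have hr1 : (1:ℝ) ≤ r := le_trans (le_max_right _ _) hr
    have hr0 : (0:ℝ) < r := lt_of_lt_of_le one_pos hr1
    have hsub : Metric.sphere (0 : EuclideanSpace ℝ (Fin (m+1))) r ⊆
        {x : EuclideanSpace ℝ (Fin (m+1)) | R ≤ ‖x‖} := by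
      intro x hxs
      have hxn : ‖x‖ = r := mem_sphere_zero_iff_norm.mp hxs
      simp only [Set.mem_setOf_eq, hxn]
      exact hrR
    have hSfin : μH[(m:ℝ)] (Metric.sphere (0 : EuclideanSpace ℝ (Fin (m+1))) r) < ⊤ := by
      rw [sphere_hausdorff_scale m hr0]
      exact ENNReal.mul_lt_top
        (ENNReal.rpow_lt_top_of_nonneg hm0 ENNReal.ofReal_ne_top) (sphere_hausdorff_lt_top m)
    have iF1 := integrableOn_sphere_of_continuousOn hSfin (hcF1.mono hsub)
    have iF0 := integrableOn_sphere_of_continuousOn hSfin (hcF0.mono hsub)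
    have iP := integrableOn_sphere_of_continuousOn hSfin (hcP.mono hsub)
    have iQ := integrableOn_sphere_of_continuousOn hSfin (hcQ.mono hsub)
    have hDcont : ContinuousOn
        (fun x => (F1 x - 2 * (m:ℝ) * Pf x) - (F0 x - 2 * (m:ℝ) * Qf x))
        (Metric.sphere (0 : EuclideanSpace ℝ (Fin (m+1))) r) :=
      ((hcF1.mono hsub).sub (continuousOn_const.mul (hcP.mono hsub))).sub
        ((hcF0.mono hsub).sub (continuousOn_const.mul (hcQ.mono hsub)))
    have hcomb :
        ((∫ x in Metric.sphere (0 : EuclideanSpace ℝ (Fin (m+1))) r, F1 x ∂μH[(m:ℝ)]) -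
          2 * (m:ℝ) * ∫ x in Metric.sphere (0 : EuclideanSpace ℝ (Fin (m+1))) r, Pf x ∂μH[(m:ℝ)]) -
        ((∫ x in Metric.sphere (0 : EuclideanSpace ℝ (Fin (m+1))) r, F0 x ∂μH[(m:ℝ)]) -
          2 * (m:ℝ) * ∫ x in Metric.sphere (0 : EuclideanSpace ℝ (Fin (m+1))) r, Qf x ∂μH[(m:ℝ)]) =
        ∫ x in Metric.sphere (0 : EuclideanSpace ℝ (Fin (m+1))) r,
          ((F1 x - 2 * (m:ℝ) * Pf x) - (F0 x - 2 * (m:ℝ) * Qf x)) ∂μH[(m:ℝ)] := by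
      have iA : MeasureTheory.IntegrableOn (fun x => F1 x - 2 * (m:ℝ) * Pf x)
          (Metric.sphere (0 : EuclideanSpace ℝ (Fin (m+1))) r) μH[(m:ℝ)] :=
        iF1.sub (iP.const_mul _)
      have iB : MeasureTheory.IntegrableOn (fun x => F0 x - 2 * (m:ℝ) * Qf x)
          (Metric.sphere (0 : EuclideanSpace ℝ (Fin (m+1))) r) μH[(m:ℝ)] :=
        iF0.sub (iQ.const_mul _)
      rw [← integral_const_mul, ← integral_const_mul, ← integral_sub iF1 (iP.const_mul _),
        ← integral_sub iF0 (iQ.const_mul _), ← integral_sub iA iB]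
    rw [hcomb]
    have hb := norm_setIntegral_le_of_norm_le_const (f := fun x => (F1 x - 2 * (m:ℝ) * Pf x) - (F0 x - 2 * (m:ℝ) * Qf x)) (C := K * r ^ (-2*τ - 1)) hSfin
      (fun x hxS => by
        have hxn : ‖x‖ = r := mem_sphere_zero_iff_norm.mp hxS
        have hxR : R ≤ ‖x‖ := by rw [hxn]; exact hrR
        have h := hDb x hxR
        rw [hxn] at h
        simpa [Real.norm_eq_abs] using h)
    have hmeas : (μH[(m:ℝ)] (Metric.sphere (0 : EuclideanSpace ℝ (Fin (m+1))) r)).toReal =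
        r ^ (m:ℝ) * M := by
      rw [sphere_hausdorff_scale m hr0, ENNReal.toReal_mul, ← ENNReal.toReal_rpow,
        ENNReal.toReal_ofReal hr0.le]
    have hrpow : r ^ (-2*τ - 1) * r ^ (m:ℝ) = r ^ ((m:ℝ) - 2*τ - 1) := by
      rw [← Real.rpow_add hr0]
      ring_nf
    calc ‖∫ x in Metric.sphere (0 : EuclideanSpace ℝ (Fin (m+1))) r,
          ((F1 x - 2 * (m:ℝ) * Pf x) - (F0 x - 2 * (m:ℝ) * Qf x)) ∂μH[(m:ℝ)]‖
        ≤ (K * r ^ (-2*τ - 1)) *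
          (μH[(m:ℝ)] (Metric.sphere (0 : EuclideanSpace ℝ (Fin (m+1))) r)).toReal := hb
      _ = K * M * r ^ ((m:ℝ) - 2*τ - 1) := by rw [hmeas, ← hrpow]; ring
  · have h := (tendsto_rpow_neg_atTop hy).const_mul (K * M)
    rw [mul_zero] at h
    refine h.congr fun r => ?_
    congr 1
    ring_nf
end
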